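/- arXiv:0904.3045 — 9 statements merged into one kernel-verified Lean document; each statement's English description precedes it below -/
import Mathlib

section
/- A Gorenstein flat module with finite flat dimension is flat. -/
open CategoryTheory DirectSum

universe u

section Defs

variable (R : Type u) [Ring R]

/-- The ℤ-indexed complex `⋯ → P (i+1) → P i → ⋯` is exact, and it is the `n`-periodic
unrolling of an exact sequence `0 → M → P_{n-1} → ⋯ → P_0 → M → 0`; that is, `M` is
(isomorphic to) the syzygy of the complex at every position divisible by `n`. -/
def IsPeriodicExact (n : ℕ) (M : Type u) [AddCommGroup M] [Module R M]
    (P : ℤ → ModuleCat.{u} R) (d : ∀ i : ℤ, P (i + 1) →ₗ[R] P i) : Prop :=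
  (∀ i : ℤ, Function.Exact (d (i + 1)) (d i)) ∧
  ∀ k : ℤ, Nonempty (M ≃ₗ[R] LinearMap.range (d ((n : ℤ) * k)))

/-- The complex stays exact after applying `Hom_R(-, Q)` for every projective `Q`. -/
def IsHomExact (P : ℤ → ModuleCat.{u} R) (d : ∀ i : ℤ, P (i + 1) →ₗ[R] P i) : Prop :=
  ∀ (Q : ModuleCat.{u} R), Module.Projective R Q →
    ∀ i : ℤ, Function.Exact (fun g : P i →ₗ[R] Q => g.comp (d i))
      (fun g : P (i + 1) →ₗ[R] Q => g.comp (d (i + 1)))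

/-- `M` is `n`-strongly Gorenstein projective: there is an exact sequence
`0 → M → P_{n-1} → ⋯ → P_0 → M → 0` with all `P i` projective which stays exact
under `Hom_R(-, Q)` for every projective `Q` (encoded via its periodic unrolling). -/
def IsNSGProjective (n : ℕ) (M : Type u) [AddCommGroup M] [Module R M] : Prop :=
  ∃ (P : ℤ → ModuleCat.{u} R) (d : ∀ i : ℤ, P (i + 1) →ₗ[R] P i),
    (∀ i, Module.Projective R (P i)) ∧ IsPeriodicExact R n M P d ∧ IsHomExact R P d

/-- `M` is Gorenstein projective: it is a syzygy of a totally acyclic complex of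
projectives. -/
def IsGProjective (M : Type u) [AddCommGroup M] [Module R M] : Prop :=
  ∃ (P : ℤ → ModuleCat.{u} R) (d : ∀ i : ℤ, P (i + 1) →ₗ[R] P i),
    (∀ i, Module.Projective R (P i)) ∧ (∀ i : ℤ, Function.Exact (d (i + 1)) (d i)) ∧
    IsHomExact R P d ∧ Nonempty (M ≃ₗ[R] LinearMap.range (d 0))

/-- The projective dimension of `M` is at most `m`. -/
def projDimLE : ℕ → ModuleCat.{u} R → Prop
  | 0, M => Module.Projective R M
  | m + 1, M => ∃ (F : ModuleCat.{u} R) (f : F →ₗ[R] M), Module.Projective R F ∧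
      Function.Surjective f ∧ projDimLE m (ModuleCat.of R (LinearMap.ker f))

end Defs

section FlatDefs

variable (R : Type u) [CommRing R]

/-- The complex stays exact after applying `I ⊗_R -` for every injective module `I`. -/
def IsTensorExact (P : ℤ → ModuleCat.{u} R) (d : ∀ i : ℤ, P (i + 1) →ₗ[R] P i) : Prop :=
  ∀ (I : ModuleCat.{u} R), Module.Injective R I →
    ∀ i : ℤ, Function.Exact (LinearMap.lTensor I (d (i + 1))) (LinearMap.lTensor I (d i))

/-- `M` is `n`-strongly Gorenstein flat: there is an exact sequence
`0 → M → F_{n-1} → ⋯ → F_0 → M → 0` with all `F i` flat which stays exact under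
`I ⊗_R -` for every injective `I` (encoded via its periodic unrolling). -/
def IsNSGFlat (n : ℕ) (M : Type u) [AddCommGroup M] [Module R M] : Prop :=
  ∃ (P : ℤ → ModuleCat.{u} R) (d : ∀ i : ℤ, P (i + 1) →ₗ[R] P i),
    (∀ i, Module.Flat R (P i)) ∧ IsPeriodicExact R n M P d ∧ IsTensorExact R P d

/-- `M` is Gorenstein flat: it is a syzygy of an exact complex of flat modules which
stays exact under `I ⊗_R -` for every injective `I`. -/
def IsGFlat (M : Type u) [AddCommGroup M] [Module R M] : Prop :=
  ∃ (P : ℤ → ModuleCat.{u} R) (d : ∀ i : ℤ, P (i + 1) →ₗ[R] P i),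
    (∀ i, Module.Flat R (P i)) ∧ (∀ i : ℤ, Function.Exact (d (i + 1)) (d i)) ∧
    IsTensorExact R P d ∧ Nonempty (M ≃ₗ[R] LinearMap.range (d 0))

/-- The flat dimension of `M` is at most `m`. -/
def flatDimLE : ℕ → ModuleCat.{u} R → Prop
  | 0, M => Module.Flat R M
  | m + 1, M => ∃ (F : ModuleCat.{u} R) (f : F →ₗ[R] M), Module.Flat R F ∧
      Function.Surjective f ∧ flatDimLE m (ModuleCat.of R (LinearMap.ker f))

/-- The complex stays exact after applying `Hom_R(X, -)` for every injective `X`. -/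
def IsCohomExact (E : ℤ → ModuleCat.{u} R) (d : ∀ i : ℤ, E (i + 1) →ₗ[R] E i) : Prop :=
  ∀ (X : ModuleCat.{u} R), Module.Injective R X →
    ∀ i : ℤ, Function.Exact (fun g : X →ₗ[R] E (i + 1 + 1) => (d (i + 1)).comp g)
      (fun g : X →ₗ[R] E (i + 1) => (d i).comp g)

/-- `M` is `n`-strongly Gorenstein injective: there is an exact sequence
`0 → M → E^{n-1} → ⋯ → E^0 → M → 0` with all `E i` injective which stays exact under
`Hom_R(X, -)` for every injective `X` (encoded via its periodic unrolling). -/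
def IsNSGInjective (n : ℕ) (M : Type u) [AddCommGroup M] [Module R M] : Prop :=
  ∃ (E : ℤ → ModuleCat.{u} R) (d : ∀ i : ℤ, E (i + 1) →ₗ[R] E i),
    (∀ i, Module.Injective R (E i)) ∧ IsPeriodicExact R n M E d ∧ IsCohomExact R E d

end FlatDefs

section GFlatProofAux

open LinearMap TensorProduct

theorem aux_factor {R : Type*} [Ring R] {A B C : Type*} [AddCommGroup A] [AddCommGroup B]
    [AddCommGroup C] [Module R A] [Module R B] [Module R C] (p : A →ₗ[R] B)
    (hp : Function.Surjective p) (u : A →ₗ[R] C) (hku : LinearMap.ker p ≤ LinearMap.ker u) :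
    ∃ v : B →ₗ[R] C, v.comp p = u := by
  refine ⟨((LinearMap.ker p).liftQ u hku).comp
    (LinearMap.quotKerEquivOfSurjective p hp).symm.toLinearMap, ?_⟩
  ext a
  have h1 : (LinearMap.quotKerEquivOfSurjective p hp).symm (p a) = Submodule.Quotient.mk a := by
    rw [LinearEquiv.symm_apply_eq]
    simp [LinearMap.quotKerEquivOfSurjective, LinearMap.quotKerEquivRange_apply_mk]
  simp [h1]


/-- Lifting property along the dual complex. -/
def LiftP (R : Type u) [CommRing R] (P : ℤ → ModuleCat.{u} R) (d : ∀ i : ℤ, P (i + 1) →ₗ[R] P i)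
    (N : Type u) [AddCommGroup N] [Module R N] : Prop :=
  ∀ (i : ℤ) (g : N →ₗ[R] CharacterModule (P (i + 1))),
    (CharacterModule.dual (d (i + 1))).comp g = 0 →
    ∃ h : N →ₗ[R] CharacterModule (P i), (CharacterModule.dual (d i)).comp h = g


section Mach
variable {R : Type u} [CommRing R]
variable {P : ℤ → ModuleCat.{u} R} {d : ∀ i : ℤ, P (i + 1) →ₗ[R] P i}

theorem liftP_of_injective (htens : IsTensorExact R P d)
    (X : Type u) [AddCommGroup X] [Module R X] (hX : Module.Injective R X) :
    LiftP R P d X := by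
  intro i g hg
  -- the character of the tensor product corresponding to g
  set gh : CharacterModule (X ⊗[R] P (i + 1)) := CharacterModule.homEquiv g with hgh
  have ghapp : ∀ (x : X) (p : P (i + 1)), gh (x ⊗ₜ p) = g x p := by
    intro x p
    rfl
  have hexact := htens (ModuleCat.of R X) hX i
  -- gh kills the range of lTensor X (d (i+1))
  have hann : ∀ w : X ⊗[R] P (i + 1 + 1), gh (LinearMap.lTensor X (d (i + 1)) w) = 0 := by
    intro w
    induction w using TensorProduct.induction_on with
    | zero => simp
    | tmul x q =>
        rw [LinearMap.lTensor_tmul, ghapp]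
        have h0 := DFunLike.congr_fun (LinearMap.congr_fun hg x) q
        exact h0
    | add a b ha hb => rw [map_add, map_add, ha, hb, add_zero]
  -- gh kills the kernel of lTensor X (d i)
  have hker : ∀ z : X ⊗[R] P (i + 1), LinearMap.lTensor X (d i) z = 0 → gh z = 0 := by
    intro z hz
    obtain ⟨w, rfl⟩ := (hexact z).mp hz
    exact hann w
  -- factor gh through the range of lTensor X (d i)
  set p := LinearMap.lTensor X (d i) with hp
  obtain ⟨v, hv⟩ := aux_factor (R := ℤ)
    ((p.rangeRestrict).restrictScalars ℤ) (fun y => by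
      obtain ⟨z, hz⟩ := LinearMap.surjective_rangeRestrict p y; exact ⟨z, hz⟩)
    gh.toIntLinearMap (by
      intro z hz
      simp only [LinearMap.mem_ker, LinearMap.restrictScalars_apply] at hz ⊢
      have hz' : p z = 0 := by
        have := congrArg (Submodule.subtype _) hz
        simpa using this
      exact hker z hz')
  -- extend v along the inclusion of the range
  obtain ⟨w, hw⟩ := CharacterModule.dual_surjective_of_injective (R := R)
    (LinearMap.range p).subtype (Submodule.injective_subtype _) v.toAddMonoidHom
  -- the lift
  refine ⟨CharacterModule.homEquiv.symm w, ?_⟩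
  ext x q
  have h1 : ∀ y : P i, (CharacterModule.homEquiv.symm w : X →ₗ[R] CharacterModule (P i)) x y
      = w (x ⊗ₜ y) := by
    intro y; rfl
  have h2 : w (x ⊗ₜ (d i q)) = gh (x ⊗ₜ q) := by
    have hpz : (x ⊗ₜ[R] (d i q)) = (LinearMap.range p).subtype (p.rangeRestrict (x ⊗ₜ q)) := by
      simp [hp]
    rw [hpz]
    calc w ((LinearMap.range p).subtype (p.rangeRestrict (x ⊗ₜ q)))
        = (CharacterModule.dual (LinearMap.range p).subtype w) (p.rangeRestrict (x ⊗ₜ q)) := rfl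
      _ = v (p.rangeRestrict (x ⊗ₜ q)) := by rw [hw]; rfl
      _ = gh (x ⊗ₜ q) := by
          have := LinearMap.congr_fun hv (x ⊗ₜ q)
          exact this
  calc ((CharacterModule.dual (d i)).comp
        ((CharacterModule.homEquiv.symm w : X →ₗ[R] CharacterModule (P i)))) x q
      = (CharacterModule.homEquiv.symm w : X →ₗ[R] CharacterModule (P i)) x (d i q) := rfl
    _ = w (x ⊗ₜ (d i q)) := h1 _
    _ = gh (x ⊗ₜ q) := h2
    _ = g x q := ghapp x q

end Mach

section Mach2
variable {R : Type u} [CommRing R]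

variable {P : ℤ → ModuleCat.{u} R} {d : ∀ i : ℤ, P (i + 1) →ₗ[R] P i}

theorem dual_dd_zero (hex : ∀ i : ℤ, Function.Exact (d (i + 1)) (d i)) (i : ℤ) :
    (CharacterModule.dual (d (i + 1))).comp (CharacterModule.dual (d i))
      = (0 : CharacterModule (P i) →ₗ[R] CharacterModule (P (i + 1 + 1))) := by
  ext φ q
  have h0 : d i (d (i + 1) q) = 0 := (hex i).apply_apply_eq_zero q
  calc (CharacterModule.dual (d (i + 1)) ((CharacterModule.dual (d i)) φ)) q
      = φ (d i (d (i + 1) q)) := rfl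
    _ = 0 := by rw [h0]; exact map_zero φ

theorem zero_of_comp_surj {A B C : Type u} [AddCommGroup A] [AddCommGroup B] [AddCommGroup C]
    [Module R A] [Module R B] [Module R C] (p : A →ₗ[R] B) (hp : Function.Surjective p)
    (w : B →ₗ[R] C) (h : w.comp p = 0) : w = 0 := by
  ext b
  obtain ⟨a, rfl⟩ := hp b
  exact LinearMap.congr_fun h a

theorem liftP_of_flatDimLE (hflat : ∀ i, Module.Flat R (P i))
    (hex : ∀ i : ℤ, Function.Exact (d (i + 1)) (d i)) (htens : IsTensorExact R P d) :
    ∀ (n : ℕ) (N : ModuleCat.{u} R), flatDimLE R n N → LiftP R P d (CharacterModule N) := by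
  intro n
  induction n with
  | zero =>
      intro N hN
      have : Module.Flat R N := hN
      exact liftP_of_injective htens _ ((Module.Flat.iff_characterModule_injective).mp this)
  | succ n IH =>
      intro N hN
      obtain ⟨F, f, hF, hfsurj, hk⟩ := hN
      set K := LinearMap.ker f with hK
      set e := CharacterModule.dual f with he
      have he_inj : Function.Injective e := by
        intro a b hab
        ext x
        obtain ⟨y, rfl⟩ := hfsurj x
        exact DFunLike.congr_fun hab y
      set res := CharacterModule.dual (K.subtype) with hres
      have hres_surj : Function.Surjective res :=
        CharacterModule.dual_surjective_of_injective K.subtype (Submodule.injective_subtype K)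
      have hrange : ∀ φ : CharacterModule F, res φ = 0 → ∃ ψ, e ψ = φ := by
        intro φ hφ
        obtain ⟨v, hv⟩ := aux_factor (R := ℤ) (f.restrictScalars ℤ) hfsurj φ.toIntLinearMap
          (by
            intro x hx
            simp only [LinearMap.mem_ker, LinearMap.restrictScalars_apply] at hx ⊢
            have : φ (K.subtype ⟨x, hx⟩) = 0 := DFunLike.congr_fun hφ ⟨x, hx⟩
            exact this)
        refine ⟨v.toAddMonoidHom, ?_⟩
        ext x
        exact LinearMap.congr_fun hv x
      have hres_e : res.comp e = 0 := by
        ext ψ k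
        have : f (K.subtype k) = 0 := k.2
        calc (res (e ψ)) k = ψ (f (K.subtype k)) := rfl
          _ = 0 := by rw [this]; exact map_zero ψ
      intro i g hg
      have hinj1 : Module.Injective R (CharacterModule (P (i + 1))) :=
        (Module.Flat.iff_characterModule_injective).mp (hflat (i + 1))
      obtain ⟨g₁, hg₁⟩ := hinj1.out e he_inj g
      set u := (CharacterModule.dual (d (i + 1))).comp g₁ with hu_def
      have hku : ∀ φ, res φ = 0 → u φ = 0 := by
        intro φ hφ
        obtain ⟨ψ, rfl⟩ := hrange φ hφ
        have : g₁ (e ψ) = g ψ := hg₁ ψ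
        calc u (e ψ) = (CharacterModule.dual (d (i + 1))) (g₁ (e ψ)) := rfl
          _ = (CharacterModule.dual (d (i + 1))) (g ψ) := by rw [this]
          _ = 0 := LinearMap.congr_fun hg ψ
      obtain ⟨v, hv⟩ := aux_factor res hres_surj u (fun φ hφ => hku φ hφ)
      have hv0 : (CharacterModule.dual (d (i + 1 + 1))).comp v = 0 := by
        apply zero_of_comp_surj res hres_surj
        rw [LinearMap.comp_assoc, hv, hu_def, ← LinearMap.comp_assoc,
          dual_dd_zero hex (i + 1)]
        ext φ q; rfl
      obtain ⟨w, hw⟩ := IH (ModuleCat.of R K) hk (i + 1) v hv0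
      set g₂ := g₁ - w.comp res with hg₂def
      have hg₂ : (CharacterModule.dual (d (i + 1))).comp g₂ = 0 := by
        rw [hg₂def, LinearMap.comp_sub, ← hu_def, ← LinearMap.comp_assoc, hw, hv, sub_self]
      have hFinj : Module.Injective R (CharacterModule F) :=
        (Module.Flat.iff_characterModule_injective).mp hF
      obtain ⟨h₁, hh₁⟩ := liftP_of_injective htens (CharacterModule F) hFinj i g₂ hg₂
      refine ⟨h₁.comp e, ?_⟩
      rw [← LinearMap.comp_assoc, hh₁, hg₂def, LinearMap.sub_comp, LinearMap.comp_assoc,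
        hres_e, LinearMap.comp_zero, sub_zero]
      ext x q
      exact DFunLike.congr_fun (hg₁ x) q

end Mach2

end GFlatProofAux

/-- A Gorenstein flat module with finite flat dimension is flat. -/
theorem gFlat_of_finite_flat_dim_is_flat (R : Type u) [CommRing R]
    (M : Type u) [AddCommGroup M] [Module R M]
    (hG : IsGFlat R M) (hfd : ∃ m : ℕ, flatDimLE R m (ModuleCat.of R M)) :
    Module.Flat R M := by
  obtain ⟨P, d, hflat, hex, htens, ⟨eM⟩⟩ := hG
  obtain ⟨m, hm⟩ := hfd
  rw [Module.Flat.iff_characterModule_injective]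
  set ι : M →ₗ[R] P 0 := (LinearMap.range (d 0)).subtype.comp eM.toLinearMap with hι
  have hι_inj : Function.Injective ι :=
    (Submodule.injective_subtype _).comp eM.injective
  set ρ : P (0 + 1) →ₗ[R] M := eM.symm.toLinearMap.comp ((d 0).rangeRestrict) with hρ
  have hρ_surj : Function.Surjective ρ :=
    eM.symm.surjective.comp (LinearMap.surjective_rangeRestrict (d 0))
  have hcomp : ι.comp ρ = d 0 := by
    ext q
    simp [hι, hρ]
  set π := CharacterModule.dual ι with hπ
  have hπ_surj : Function.Surjective π :=
    CharacterModule.dual_surjective_of_injective ι hι_inj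
  have dir1 : ∀ φ : CharacterModule (P 0), π φ = 0 → (CharacterModule.dual (d 0)) φ = 0 := by
    intro φ hφ
    ext q
    have h1 : d 0 q = ι (ρ q) := (LinearMap.congr_fun hcomp q).symm
    calc (CharacterModule.dual (d 0) φ) q = φ (d 0 q) := rfl
      _ = φ (ι (ρ q)) := by rw [h1]
      _ = (π φ) (ρ q) := rfl
      _ = 0 := by rw [hφ]; rfl
  have dir2 : ∀ φ : CharacterModule (P 0), (CharacterModule.dual (d 0)) φ = 0 → π φ = 0 := by
    intro φ hφ
    ext x
    obtain ⟨q, rfl⟩ := hρ_surj x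
    have h1 : ι (ρ q) = d 0 q := LinearMap.congr_fun hcomp q
    calc (π φ) (ρ q) = φ (ι (ρ q)) := rfl
      _ = φ (d 0 q) := by rw [h1]
      _ = (CharacterModule.dual (d 0) φ) q := rfl
      _ = 0 := by rw [hφ]; rfl
  obtain ⟨ψ, hψfac⟩ := aux_factor π hπ_surj (CharacterModule.dual (d 0))
    (fun φ hφ => dir1 φ hφ)
  have hψ0 : (CharacterModule.dual (d (0 + 1))).comp ψ = 0 := by
    apply zero_of_comp_surj π hπ_surj
    rw [LinearMap.comp_assoc, hψfac, dual_dd_zero hex 0]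
  obtain ⟨h, hh⟩ := liftP_of_flatDimLE hflat hex htens m (ModuleCat.of R M) hm 0 ψ hψ0
  have hsec : ∀ c : CharacterModule M, π (h c) = c := by
    intro c
    obtain ⟨φ, rfl⟩ := hπ_surj c
    have h1 : CharacterModule.dual (d 0) (φ - h (π φ)) = 0 := by
      rw [map_sub]
      have h2 : CharacterModule.dual (d 0) (h (π φ)) = ψ (π φ) := LinearMap.congr_fun hh (π φ)
      have h3 : ψ (π φ) = CharacterModule.dual (d 0) φ := LinearMap.congr_fun hψfac φ
      rw [h2, h3, sub_self]
    have h4 : π (φ - h (π φ)) = 0 := dir2 _ h1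
    rw [map_sub] at h4
    have := sub_eq_zero.mp h4
    exact this.symm
  refine Module.Injective.mk ?_
  intro X Y _ _ _ _ j hj t
  have hP0 : Module.Injective R (CharacterModule (P 0)) :=
    (Module.Flat.iff_characterModule_injective).mp (hflat 0)
  obtain ⟨H, hH⟩ := hP0.out j hj (h.comp t)
  refine ⟨π.comp H, fun x => ?_⟩
  calc π (H (j x)) = π (h (t x)) := by rw [hH x]; rfl
    _ = t x := hsec (t x)
end

section
/- If n divides m, then every n-strongly Gorenstein projective module is m-strongly Gorenstein projective. -/
open CategoryTheory DirectSum

universe u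

/-- If `n ∣ m`, then every `n`-strongly Gorenstein projective module is
`m`-strongly Gorenstein projective. -/
theorem nSGProjective_of_dvd (R : Type u) [Ring R] (m n : ℕ) (hn : 0 < n) (hm : 0 < m)
    (hdvd : n ∣ m) (M : Type u) [AddCommGroup M] [Module R M]
    (hM : IsNSGProjective R n M) : IsNSGProjective R m M := by
  obtain ⟨P, d, hproj, ⟨hex, hsyz⟩, hhom⟩ := hM
  obtain ⟨c, rfl⟩ := hdvd
  refine ⟨P, d, hproj, ⟨hex, fun k => ?_⟩, hhom⟩
  have h : ((n * c : ℕ) : ℤ) * k = (n : ℤ) * ((c : ℤ) * k) := by push_cast; ring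
  have key : ∀ i j : ℤ, i = j →
      Nonempty (M ≃ₗ[R] LinearMap.range (d i)) →
      Nonempty (M ≃ₗ[R] LinearMap.range (d j)) := by
    rintro i j rfl h; exact h
  exact key _ _ h.symm (hsyz (c * k))
end

section
/- For any positive integers m and n, a module is both m-strongly Gorenstein projective and n-strongly Gorenstein projective if and only if it is d-strongly Gorenstein projective, where d = gcd(m, n). -/
open CategoryTheory DirectSum

universe u

section Aux
variable {R : Type u} [Ring R]

/-- Transport along equality of `ModuleCat` objects. -/
def mEqv {A B : ModuleCat.{u} R} (h : A = B) : A ≃ₗ[R] B := h ▸ LinearEquiv.refl R A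

@[simp] lemma mEqv_rfl {A : ModuleCat.{u} R} : mEqv (rfl : A = A) = LinearEquiv.refl R A := rfl

/-- A short exact sequence `0 → A → P → B → 0` with `P` projective which stays
exact under `Hom(-, Q)` for projective `Q` (equivalently, maps `A → Q` extend to `P`). -/
structure SESpkg (R : Type u) [Ring R] (A P B : ModuleCat.{u} R) : Type u where
  ι : A →ₗ[R] P
  π : P →ₗ[R] B
  proj : Module.Projective R P
  inj : Function.Injective ι
  surj : Function.Surjective π
  exact : Function.Exact ι π
  ext : ∀ (Q : ModuleCat.{u} R), Module.Projective R Q →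
    ∀ f : A →ₗ[R] Q, ∃ h : P →ₗ[R] Q, h ∘ₗ ι = f

/-- Data of a "good chain" witnessing `n`-strong Gorenstein projectivity. -/
structure ChainW (R : Type u) [Ring R] (n : ℕ) (M : Type u) [AddCommGroup M] [Module R M] :
    Type (u+1) where
  σ : ℤ → ModuleCat.{u} R
  Pm : ℤ → ModuleCat.{u} R
  pkg : ∀ i : ℤ, SESpkg R (σ (i+1)) (Pm i) (σ i)
  iso : ∀ k : ℤ, Nonempty (M ≃ₗ[R] σ ((n:ℤ)*k+1))

def GoodChain (R : Type u) [Ring R] (n : ℕ) (M : Type u) [AddCommGroup M] [Module R M] : Prop :=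
  Nonempty (ChainW R n M)

/-- Factor a linear map through a surjection whose kernel it kills. -/
lemma factorThru {X Y Q : Type u} [AddCommGroup X] [AddCommGroup Y] [AddCommGroup Q]
    [Module R X] [Module R Y] [Module R Q] (π : X →ₗ[R] Y) (hπ : Function.Surjective π)
    (G : X →ₗ[R] Q) (hk : ∀ x, π x = 0 → G x = 0) :
    ∃ Gbar : Y →ₗ[R] Q, Gbar ∘ₗ π = G := by
  have hle : LinearMap.ker π ≤ LinearMap.ker G := fun x hx => hk x hx
  refine ⟨(Submodule.liftQ (LinearMap.ker π) G hle) ∘ₗ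
    (π.quotKerEquivOfSurjective hπ).symm.toLinearMap, ?_⟩
  ext x
  have h1 : (π.quotKerEquivOfSurjective hπ) (Submodule.Quotient.mk x) = π x := rfl
  have h2 : (π.quotKerEquivOfSurjective hπ).symm (π x) = Submodule.Quotient.mk x := by
    rw [← h1, LinearEquiv.symm_apply_apply]
  simp [h2]

/-- Transport a `SESpkg` along linear equivalences. -/
def SESpkg.congr {A P B A' P' B' : ModuleCat.{u} R} (S : SESpkg R A P B)
    (a : A ≃ₗ[R] A') (p : P ≃ₗ[R] P') (b : B ≃ₗ[R] B') : SESpkg R A' P' B' where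
  ι := p.toLinearMap ∘ₗ S.ι ∘ₗ a.symm.toLinearMap
  π := b.toLinearMap ∘ₗ S.π ∘ₗ p.symm.toLinearMap
  proj := by have := S.proj; exact Module.Projective.of_equiv p
  inj := by
    intro x y h
    simp only [LinearMap.comp_apply] at h
    exact a.symm.injective (S.inj (p.injective h))
  surj := fun y => by
    obtain ⟨x, hx⟩ := S.surj (b.symm y)
    exact ⟨p x, by simp [hx]⟩
  exact := by
    intro y
    simp only [LinearMap.comp_apply]
    constructor
    · intro h
      have h0 : S.π (p.symm y) = 0 := by
        have := congrArg b.symm h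
        simpa using this
      obtain ⟨x, hx⟩ := (S.exact _).mp h0
      exact ⟨a x, by simp [hx]⟩
    · rintro ⟨x, rfl⟩
      simp only [LinearMap.comp_apply, LinearEquiv.symm_apply_apply]
      have h0 : S.π (S.ι (a.symm x)) = 0 := (S.exact _).mpr ⟨a.symm x, rfl⟩
      simp only [LinearEquiv.coe_coe, LinearEquiv.symm_apply_apply, h0, map_zero]
  ext := by
    intro Q hQ f
    obtain ⟨h, hh⟩ := S.ext Q hQ (f ∘ₗ a.toLinearMap)
    refine ⟨h ∘ₗ p.symm.toLinearMap, ?_⟩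
    ext x
    have := congrArg (fun g => g (a.symm x)) hh
    simpa using this

end Aux

section Equiv
variable {R : Type u} [Ring R] {n : ℕ} {M : Type u} [AddCommGroup M] [Module R M]

lemma GoodChain.isNSG (h : GoodChain R n M) : IsNSGProjective R n M := by
  obtain ⟨C⟩ := h
  refine ⟨C.Pm, fun i => (C.pkg i).ι ∘ₗ (C.pkg (i+1)).π, fun i => (C.pkg i).proj, ⟨?_, ?_⟩, ?_⟩
  · -- exactness
    intro i y
    simp only [LinearMap.comp_apply]
    constructor
    · intro h0
      have hz : (C.pkg (i+1)).π y = 0 := (C.pkg i).inj (by simpa using h0)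
      obtain ⟨x, hx⟩ := ((C.pkg (i+1)).exact y).mp hz
      obtain ⟨z, hz'⟩ := (C.pkg (i+1+1)).surj x
      refine ⟨z, ?_⟩
      simp only [LinearMap.comp_apply, hz', hx]
    · rintro ⟨z, rfl⟩
      simp only [LinearMap.comp_apply]
      have h0 : (C.pkg (i+1)).π ((C.pkg (i+1)).ι ((C.pkg (i+1+1)).π z)) = 0 :=
        ((C.pkg (i+1)).exact _).mpr ⟨_, rfl⟩
      rw [h0, map_zero]
  · -- isos
    intro k
    obtain ⟨e⟩ := C.iso k
    have hr : LinearMap.range ((C.pkg ((n:ℤ)*k)).ι ∘ₗ (C.pkg ((n:ℤ)*k+1)).π)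
        = LinearMap.range (C.pkg ((n:ℤ)*k)).ι := by
      rw [LinearMap.range_comp, LinearMap.range_eq_top.mpr (C.pkg ((n:ℤ)*k+1)).surj,
        Submodule.map_top]
    exact ⟨e.trans ((LinearEquiv.ofInjective _ (C.pkg ((n:ℤ)*k)).inj).trans
      (LinearEquiv.ofEq _ _ hr.symm))⟩
  · -- Hom-exactness
    intro Q hQ i G
    simp only
    constructor
    · intro h0
      have h1 : ∀ x, (C.pkg (i+1)).π x = 0 → G x = 0 := by
        intro x hx
        obtain ⟨a, ha⟩ := ((C.pkg (i+1)).exact x).mp hx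
        obtain ⟨z, hz⟩ := (C.pkg (i+1+1)).surj a
        have := congrArg (fun g => g z) h0
        simp only [LinearMap.comp_apply] at this ⊢
        rw [← ha, ← hz]
        simpa using this
      obtain ⟨Gbar, hGbar⟩ := factorThru (C.pkg (i+1)).π (C.pkg (i+1)).surj G h1
      obtain ⟨h, hh⟩ := (C.pkg i).ext Q hQ Gbar
      refine ⟨h, ?_⟩
      ext x
      simp only [LinearMap.comp_apply]
      have e1 := congrArg (fun g => g ((C.pkg (i+1)).π x)) hh
      have e2 := congrArg (fun g => g x) hGbar
      simp only [LinearMap.comp_apply] at e1 e2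
      rw [e1, e2]
    · rintro ⟨H, rfl⟩
      ext z
      simp only [LinearMap.comp_apply, LinearMap.zero_apply]
      have h0 : (C.pkg (i+1)).π ((C.pkg (i+1)).ι ((C.pkg (i+1+1)).π z)) = 0 :=
        ((C.pkg (i+1)).exact _).mpr ⟨_, rfl⟩
      rw [h0, map_zero, map_zero]

section ofNSG
variable (P : ℤ → ModuleCat.{u} R) (d : ∀ i : ℤ, P (i + 1) →ₗ[R] P i)

/-- The extension lemma: maps from a syzygy into a projective extend. -/
lemma extLem (hex : ∀ i : ℤ, Function.Exact (d (i + 1)) (d i)) (hhom : IsHomExact R P d)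
    (j : ℤ) (Q : ModuleCat.{u} R) (hQ : Module.Projective R Q)
    (f : ↥(LinearMap.range (d j)) →ₗ[R] Q) :
    ∃ h : P j →ₗ[R] Q, h ∘ₗ (LinearMap.range (d j)).subtype = f := by
  set G : P (j+1) →ₗ[R] Q := f ∘ₗ (d j).rangeRestrict with hG
  have hG0 : G ∘ₗ d (j+1) = 0 := by
    ext x
    simp only [LinearMap.comp_apply, LinearMap.zero_apply, hG]
    have : (d j).rangeRestrict (d (j+1) x) = 0 := by
      ext
      simpa using (hex j (d (j+1) x)).mpr ⟨x, rfl⟩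
    rw [this, map_zero]
  obtain ⟨h, hh⟩ := (hhom Q hQ j G).mp hG0
  refine ⟨h, ?_⟩
  ext ⟨x, hx⟩
  obtain ⟨z, rfl⟩ := hx
  have hthis := congrArg (fun g => g z) hh
  simp only [LinearMap.comp_apply] at hthis ⊢
  simp only [Submodule.subtype_apply]
  exact hthis

/-- Build a `SESpkg` from the complex at honest indices. -/
noncomputable def pkgOfComplex (hproj : ∀ i, Module.Projective R (P i))
    (hex : ∀ i : ℤ, Function.Exact (d (i + 1)) (d i)) (hhom : IsHomExact R P d) (j : ℤ) :
    SESpkg R (ModuleCat.of R ↥(LinearMap.range (d (j+1)))) (P (j+1))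
      (ModuleCat.of R ↥(LinearMap.range (d j))) where
  ι := (LinearMap.range (d (j+1))).subtype
  π := (d j).rangeRestrict
  proj := hproj (j+1)
  inj := Submodule.injective_subtype _
  surj := (d j).surjective_rangeRestrict
  exact := by
    intro y
    constructor
    · intro h0
      have : d j y = 0 := congrArg Subtype.val h0
      obtain ⟨x, hx⟩ := (hex j y).mp this
      exact ⟨⟨d (j+1) x, ⟨x, rfl⟩⟩, by simpa using hx⟩
    · rintro ⟨⟨x, hx⟩, rfl⟩
      obtain ⟨z, rfl⟩ := hx
      exact Subtype.ext ((hex j (d (j+1) z)).mpr ⟨z, rfl⟩)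
  ext := fun Q hQ f => extLem P d hex hhom (j+1) Q hQ f

end ofNSG

lemma IsNSGProjective.goodChain (h : IsNSGProjective R n M) : GoodChain R n M := by
  obtain ⟨P, d, hproj, ⟨hex, hiso⟩, hhom⟩ := h
  refine ⟨⟨fun j => ModuleCat.of R ↥(LinearMap.range (d (j-1))), fun i => P ((i-1)+1),
    fun i => ?_, fun k => ?_⟩⟩
  · exact (pkgOfComplex P d hproj hex hhom (i-1)).congr
      (mEqv (congrArg (fun j => ModuleCat.of R ↥(LinearMap.range (d j))) (by ring)))
      (LinearEquiv.refl R _) (LinearEquiv.refl R _)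
  · obtain ⟨e⟩ := hiso k
    exact ⟨e.trans (mEqv (congrArg (fun j => ModuleCat.of R ↥(LinearMap.range (d j)))
      (by ring : (n:ℤ)*k = (n:ℤ)*k+1-1)))⟩

end Equiv

section Ops
variable {R : Type u} [Ring R] {M : Type u} [AddCommGroup M] [Module R M]

lemma GoodChain.of_dvd {g n : ℕ} (hdvd : g ∣ n) (h : GoodChain R g M) : GoodChain R n M := by
  obtain ⟨C⟩ := h
  obtain ⟨c, rfl⟩ := hdvd
  refine ⟨⟨C.σ, C.Pm, C.pkg, fun k => ?_⟩⟩
  have h1 := C.iso ((c:ℤ)*k)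
  have harith : (g:ℤ)*((c:ℤ)*k)+1 = ((g*c : ℕ):ℤ)*k+1 := by push_cast; ring
  rwa [harith] at h1

/-- Stable isomorphism: isomorphic after adding projective direct summands. -/
def StIso (R : Type u) [Ring R] (A B : Type u) [AddCommGroup A] [Module R A]
    [AddCommGroup B] [Module R B] : Prop :=
  ∃ U V : ModuleCat.{u} R, Module.Projective R U ∧ Module.Projective R V ∧
    Nonempty ((A × ↥U) ≃ₗ[R] B × ↥V)

variable {A B C : Type u} [AddCommGroup A] [Module R A] [AddCommGroup B] [Module R B]
  [AddCommGroup C] [Module R C]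

def prodPUnitEquiv (R : Type u) [Ring R] (A : Type u) [AddCommGroup A] [Module R A] :
    (A × PUnit.{u+1}) ≃ₗ[R] A where
  toFun := Prod.fst
  invFun := fun a => (a, PUnit.unit)
  map_add' := fun _ _ => rfl
  map_smul' := fun _ _ => rfl
  left_inv := fun ⟨a, u⟩ => by cases u; rfl
  right_inv := fun _ => rfl

lemma StIso.ofIso (e : Nonempty (A ≃ₗ[R] B)) : StIso R A B := by
  obtain ⟨e⟩ := e
  exact ⟨ModuleCat.of R PUnit, ModuleCat.of R PUnit, inferInstance, inferInstance,
    ⟨(prodPUnitEquiv R A).trans (e.trans (prodPUnitEquiv R B).symm)⟩⟩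

lemma StIso.symm (h : StIso R A B) : StIso R B A := by
  obtain ⟨U, V, hU, hV, ⟨e⟩⟩ := h
  exact ⟨V, U, hV, hU, ⟨e.symm⟩⟩

lemma StIso.trans (h1 : StIso R A B) (h2 : StIso R B C) : StIso R A C := by
  obtain ⟨U, V, hU, hV, ⟨e1⟩⟩ := h1
  obtain ⟨U', V', hU', hV', ⟨e2⟩⟩ := h2
  refine ⟨ModuleCat.of R (↥U × ↥U'), ModuleCat.of R (↥V' × ↥V), ?_, ?_, ?_⟩
  · haveI := hU; haveI := hU'; exact inferInstanceAs (Module.Projective R (↥U × ↥U'))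
  · haveI := hV; haveI := hV'; exact inferInstanceAs (Module.Projective R (↥V' × ↥V))
  · exact ⟨(LinearEquiv.prodAssoc R A (↥U) (↥U')).symm.trans
      ((e1.prodCongr (LinearEquiv.refl R (↥U'))).trans
      ((LinearEquiv.prodAssoc R B (↥V) (↥U')).trans
      (((LinearEquiv.refl R B).prodCongr (LinearEquiv.prodComm R (↥V) (↥U'))).trans
      ((LinearEquiv.prodAssoc R B (↥U') (↥V)).symm.trans
      ((e2.prodCongr (LinearEquiv.refl R (↥V))).trans
      (LinearEquiv.prodAssoc R C (↥V') (↥V)))))))⟩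

lemma StIso.congr_left {A' : Type u} [AddCommGroup A'] [Module R A']
    (e : A ≃ₗ[R] A') (h : StIso R A B) : StIso R A' B :=
  (StIso.ofIso ⟨e.symm⟩).trans h

lemma StIso.congr_right {B' : Type u} [AddCommGroup B'] [Module R B']
    (e : B ≃ₗ[R] B') (h : StIso R A B) : StIso R A B' :=
  h.trans (StIso.ofIso ⟨e⟩)

/-- Splitting of a short exact sequence with a section. -/
lemma splitIso {X : Type u} [AddCommGroup X] [Module R X]
    (ι : A →ₗ[R] X) (π : X →ₗ[R] B) (hinj : Function.Injective ι)
    (hex : Function.Exact ι π) (s : B →ₗ[R] X) (hs : ∀ b, π (s b) = b) :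
    Nonempty ((A × B) ≃ₗ[R] X) := by
  refine ⟨LinearEquiv.ofBijective (ι.coprod s) ⟨?_, ?_⟩⟩
  · intro ⟨a, b⟩ ⟨a', b'⟩ h
    simp only [LinearMap.coprod_apply] at h
    have hb : b = b' := by
      have := congrArg π h
      have hπι : ∀ x, π (ι x) = 0 := fun x => (hex _).mpr ⟨x, rfl⟩
      simpa [map_add, hπι, hs] using this
    subst hb
    have : ι a = ι a' := by
      have := add_right_cancel h
      exact this
    exact Prod.ext (hinj this) rfl
  · intro x
    have hmem : π (x - s (π x)) = 0 := by simp [map_sub, hs]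
    obtain ⟨a, ha⟩ := (hex _).mp hmem
    exact ⟨(a, π x), by simp [LinearMap.coprod_apply, ha]⟩

/-- Schanuel's lemma. -/
lemma schanuel {A₁ P₁ A₂ P₂ : Type u}
    [AddCommGroup A₁] [Module R A₁] [AddCommGroup P₁] [Module R P₁]
    [AddCommGroup A₂] [Module R A₂] [AddCommGroup P₂] [Module R P₂]
    (ι₁ : A₁ →ₗ[R] P₁) (π₁ : P₁ →ₗ[R] C) (ι₂ : A₂ →ₗ[R] P₂) (π₂ : P₂ →ₗ[R] C)
    (hproj₁ : Module.Projective R P₁) (hproj₂ : Module.Projective R P₂)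
    (hinj₁ : Function.Injective ι₁) (hinj₂ : Function.Injective ι₂)
    (hsurj₁ : Function.Surjective π₁) (hsurj₂ : Function.Surjective π₂)
    (hex₁ : Function.Exact ι₁ π₁) (hex₂ : Function.Exact ι₂ π₂) :
    Nonempty ((A₁ × P₂) ≃ₗ[R] (A₂ × P₁)) := by
  have key : ∀ {A PA PB : Type u} [AddCommGroup A] [Module R A]
      [AddCommGroup PA] [Module R PA] [AddCommGroup PB] [Module R PB]
      (ιa : A →ₗ[R] PA) (πa : PA →ₗ[R] C) (πb : PB →ₗ[R] C),
      Module.Projective R PB → Function.Injective ιa → Function.Surjective πa →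
      Function.Surjective πb → Function.Exact ιa πa →
      Nonempty ((A × PB) ≃ₗ[R]
        ↥(LinearMap.ker (πa ∘ₗ LinearMap.fst R PA PB - πb ∘ₗ LinearMap.snd R PA PB))) := by
    intro A PA PB _ _ _ _ _ _ ιa πa πb hpb hinj hsa hsb hex
    haveI := hpb
    set S : (PA × PB) →ₗ[R] C :=
      πa ∘ₗ LinearMap.fst R PA PB - πb ∘ₗ LinearMap.snd R PA PB with hS
    have hπι : ∀ a, πa (ιa a) = 0 := fun a => (hex _).mpr ⟨a, rfl⟩
    obtain ⟨β, hβ⟩ := Module.projective_lifting_property πa πb hsa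
    have hβ' : ∀ q, πa (β q) = πb q := fun q => congrArg (fun g => g q) hβ
    have mem1 : ∀ a, (LinearMap.prod ιa (0 : A →ₗ[R] PB)) a ∈ LinearMap.ker S := by
      intro a
      rw [LinearMap.mem_ker]
      show πa (ιa a) - πb 0 = 0
      rw [hπι, map_zero, sub_zero]
    have mem2 : ∀ q, (LinearMap.prod β (LinearMap.id : PB →ₗ[R] PB)) q ∈ LinearMap.ker S := by
      intro q
      rw [LinearMap.mem_ker]
      show πa (β q) - πb q = 0
      rw [hβ', sub_self]
    refine splitIso (X := ↥(LinearMap.ker S))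
      (LinearMap.codRestrict _ (LinearMap.prod ιa 0) mem1)
      ((LinearMap.snd R PA PB) ∘ₗ (LinearMap.ker S).subtype) ?_ ?_
      (LinearMap.codRestrict _ (LinearMap.prod β LinearMap.id) mem2) (fun b => rfl)
    · intro a a' h
      exact hinj (congrArg (fun x : ↥(LinearMap.ker S) => (x : PA × PB).1) h)
    · rintro ⟨⟨p, q⟩, hpq⟩
      have hpq' : πa p - πb q = 0 := hpq
      constructor
      · intro h0
        have hq : q = 0 := h0
        subst hq
        have hp : πa p = 0 := by simpa using hpq'
        obtain ⟨a, ha⟩ := (hex p).mp hp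
        exact ⟨a, Subtype.ext (by simp [ha])⟩
      · rintro ⟨a, ha⟩
        have h2 := congrArg (fun x : ↥(LinearMap.ker S) => (x : PA × PB).2) ha
        simpa using h2.symm
  obtain ⟨e₁⟩ := key ι₁ π₁ π₂ hproj₂ hinj₁ hsurj₁ hsurj₂ hex₁
  obtain ⟨e₂⟩ := key ι₂ π₂ π₁ hproj₁ hinj₂ hsurj₂ hsurj₁ hex₂
  set S : (P₁ × P₂) →ₗ[R] C :=
    π₁ ∘ₗ LinearMap.fst R P₁ P₂ - π₂ ∘ₗ LinearMap.snd R P₁ P₂ with hS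
  set S' : (P₂ × P₁) →ₗ[R] C :=
    π₂ ∘ₗ LinearMap.fst R P₂ P₁ - π₁ ∘ₗ LinearMap.snd R P₂ P₁ with hS'
  have memswap : ∀ x : ↥(LinearMap.ker S),
      ((LinearMap.prod (LinearMap.snd R P₁ P₂) (LinearMap.fst R P₁ P₂)) ∘ₗ
        (LinearMap.ker S).subtype) x ∈ LinearMap.ker S' := by
    rintro ⟨⟨p, q⟩, hpq⟩
    have hpq' : π₁ p - π₂ q = 0 := hpq
    show π₂ q - π₁ p = 0
    rw [← neg_sub, hpq', neg_zero]
  have memswap' : ∀ x : ↥(LinearMap.ker S'),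
      ((LinearMap.prod (LinearMap.snd R P₂ P₁) (LinearMap.fst R P₂ P₁)) ∘ₗ
        (LinearMap.ker S').subtype) x ∈ LinearMap.ker S := by
    rintro ⟨⟨p, q⟩, hpq⟩
    have hpq' : π₂ p - π₁ q = 0 := hpq
    show π₁ q - π₂ p = 0
    rw [← neg_sub, hpq', neg_zero]
  have eswap : ↥(LinearMap.ker S) ≃ₗ[R] ↥(LinearMap.ker S') :=
    LinearEquiv.ofLinear
      (LinearMap.codRestrict _ _ memswap) (LinearMap.codRestrict _ _ memswap')
      (by ext ⟨⟨p, q⟩, hpq⟩ <;> rfl) (by ext ⟨⟨p, q⟩, hpq⟩ <;> rfl)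
  exact ⟨e₁.trans (eswap.trans e₂.symm)⟩

end Ops

section Step
variable {R : Type u} [Ring R]

lemma stepStIso {A₁ P₁ C₁ A₂ P₂ C₂ : Type u}
    [AddCommGroup A₁] [Module R A₁] [AddCommGroup P₁] [Module R P₁]
    [AddCommGroup C₁] [Module R C₁] [AddCommGroup A₂] [Module R A₂]
    [AddCommGroup P₂] [Module R P₂] [AddCommGroup C₂] [Module R C₂]
    (ι₁ : A₁ →ₗ[R] P₁) (π₁ : P₁ →ₗ[R] C₁) (ι₂ : A₂ →ₗ[R] P₂) (π₂ : P₂ →ₗ[R] C₂)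
    (hp₁ : Module.Projective R P₁) (hp₂ : Module.Projective R P₂)
    (hi₁ : Function.Injective ι₁) (hi₂ : Function.Injective ι₂)
    (hs₁ : Function.Surjective π₁) (hs₂ : Function.Surjective π₂)
    (he₁ : Function.Exact ι₁ π₁) (he₂ : Function.Exact ι₂ π₂)
    (h : StIso R C₁ C₂) : StIso R A₁ A₂ := by
  obtain ⟨U, V, hU, hV, ⟨e⟩⟩ := h
  haveI := hU; haveI := hV; haveI := hp₁; haveI := hp₂
  have hi₁' : Function.Injective (LinearMap.prod ι₁ (0 : A₁ →ₗ[R] ↥U)) := by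
    intro a a' hh
    exact hi₁ (congrArg Prod.fst hh)
  have hi₂' : Function.Injective (LinearMap.prod ι₂ (0 : A₂ →ₗ[R] ↥V)) := by
    intro a a' hh
    exact hi₂ (congrArg Prod.fst hh)
  have hs₁' : Function.Surjective
      (e.toLinearMap ∘ₗ (π₁.prodMap (LinearMap.id : ↥U →ₗ[R] ↥U))) := by
    apply e.surjective.comp
    exact Function.Surjective.prodMap hs₁ Function.surjective_id
  have hs₂' : Function.Surjective (π₂.prodMap (LinearMap.id : ↥V →ₗ[R] ↥V)) :=
    Function.Surjective.prodMap hs₂ Function.surjective_id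
  have he₁' : Function.Exact (LinearMap.prod ι₁ (0 : A₁ →ₗ[R] ↥U))
      (e.toLinearMap ∘ₗ (π₁.prodMap (LinearMap.id : ↥U →ₗ[R] ↥U))) := by
    rintro ⟨p, v⟩
    constructor
    · intro h0
      have h1 : ((π₁ p, v) : C₁ × ↥U) = 0 := by
        apply e.injective
        rw [map_zero]
        exact h0
      obtain ⟨a, ha⟩ := (he₁ p).mp (congrArg Prod.fst h1)
      exact ⟨a, Prod.ext ha (congrArg Prod.snd h1).symm⟩
    · rintro ⟨a, ha⟩
      rw [← ha]
      show e (π₁ (ι₁ a), (0 : ↥U)) = 0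
      rw [(he₁ (ι₁ a)).mpr ⟨a, rfl⟩]
      exact map_zero _
  have he₂' : Function.Exact (LinearMap.prod ι₂ (0 : A₂ →ₗ[R] ↥V))
      (π₂.prodMap (LinearMap.id : ↥V →ₗ[R] ↥V)) := by
    rintro ⟨p, v⟩
    constructor
    · intro h0
      obtain ⟨a, ha⟩ := (he₂ p).mp (congrArg Prod.fst h0)
      exact ⟨a, Prod.ext ha (congrArg Prod.snd h0).symm⟩
    · rintro ⟨a, ha⟩
      rw [← ha]
      show ((π₂ (ι₂ a), (0 : ↥V)) : C₂ × ↥V) = 0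
      rw [(he₂ (ι₂ a)).mpr ⟨a, rfl⟩]
      rfl
  obtain ⟨e'⟩ := schanuel (LinearMap.prod ι₁ (0 : A₁ →ₗ[R] ↥U))
    (e.toLinearMap ∘ₗ (π₁.prodMap (LinearMap.id : ↥U →ₗ[R] ↥U)))
    (LinearMap.prod ι₂ (0 : A₂ →ₗ[R] ↥V)) (π₂.prodMap (LinearMap.id : ↥V →ₗ[R] ↥V))
    (inferInstanceAs (Module.Projective R (P₁ × ↥U)))
    (inferInstanceAs (Module.Projective R (P₂ × ↥V)))
    hi₁' hi₂' hs₁' hs₂' he₁' he₂'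
  exact ⟨ModuleCat.of R (P₂ × ↥V), ModuleCat.of R (P₁ × ↥U),
    inferInstanceAs (Module.Projective R (P₂ × ↥V)),
    inferInstanceAs (Module.Projective R (P₁ × ↥U)), ⟨e'⟩⟩

lemma chainStIso {NA PA NB PB : ℕ → ModuleCat.{u} R}
    (sA : ∀ t, SESpkg R (NA (t+1)) (PA t) (NA t)) (sB : ∀ t, SESpkg R (NB (t+1)) (PB t) (NB t))
    (h0 : StIso R ↥(NA 0) ↥(NB 0)) : ∀ t, StIso R ↥(NA t) ↥(NB t) := by
  intro t
  induction t with
  | zero => exact h0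
  | succ t ih =>
    exact stepStIso (sA t).ι (sA t).π (sB t).ι (sB t).π (sA t).proj (sB t).proj
      (sA t).inj (sB t).inj (sA t).surj (sB t).surj (sA t).exact (sB t).exact ih

def punitSumNatEquiv : (PUnit.{u+1} ⊕ ℕ) ≃ ℕ where
  toFun := fun x => match x with | .inl _ => 0 | .inr n => n+1
  invFun := fun n => match n with | 0 => .inl PUnit.unit | (m+1) => .inr m
  left_inv := by rintro (⟨⟩|n) <;> rfl
  right_inv := by rintro (_|m) <;> rfl

lemma projFinsupp (U : Type u) [AddCommGroup U] [Module R U] (hU : Module.Projective R U) :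
    Module.Projective R (ℕ →₀ U) := by
  classical
  haveI := hU
  exact Module.Projective.of_equiv (finsuppLequivDFinsupp R).symm

lemma finsuppAbsorb (X : Type u) [AddCommGroup X] [Module R X] :
    Nonempty ((X × (ℕ →₀ X)) ≃ₗ[R] (ℕ →₀ X)) := by
  have e1 : ((PUnit.{u+1} ⊕ ℕ) →₀ X) ≃ₗ[R] ((PUnit.{u+1} →₀ X) × (ℕ →₀ X)) :=
    Finsupp.sumFinsuppLEquivProdFinsupp R
  have e2 : (PUnit.{u+1} →₀ X) ≃ₗ[R] X := Finsupp.LinearEquiv.finsuppUnique R X PUnit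
  have e3 : ((PUnit.{u+1} ⊕ ℕ) →₀ X) ≃ₗ[R] (ℕ →₀ X) := Finsupp.domLCongr punitSumNatEquiv
  exact ⟨((e2.symm.prodCongr (LinearEquiv.refl R (ℕ →₀ X))).trans e1.symm).trans e3⟩

lemma StIso.commonW {A B : Type u} [AddCommGroup A] [Module R A] [AddCommGroup B] [Module R B]
    (h : StIso R A B) :
    ∃ W : ModuleCat.{u} R, Module.Projective R W ∧ Nonempty ((A × ↥W) ≃ₗ[R] B × ↥W) := by
  obtain ⟨U, V, hU, hV, ⟨e⟩⟩ := h
  haveI := hU; haveI := hV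
  haveI : Module.Projective R (ℕ →₀ ↥U) := projFinsupp _ hU
  haveI : Module.Projective R (ℕ →₀ ↥V) := projFinsupp _ hV
  obtain ⟨au⟩ := finsuppAbsorb (R := R) (↥U)
  obtain ⟨av⟩ := finsuppAbsorb (R := R) (↥V)
  set WU := ℕ →₀ ↥U
  set WV := ℕ →₀ ↥V
  refine ⟨ModuleCat.of R (WU × WV), inferInstanceAs (Module.Projective R (WU × WV)), ⟨?_⟩⟩
  -- A × (WU × WV) ≃ B × (WU × WV)
  exact (((LinearEquiv.refl R A).prodCongr ((au.symm.prodCongr (LinearEquiv.refl R WV)))).trans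
    ((LinearEquiv.prodAssoc R A (↥U × WU) WV).symm.trans
    (((LinearEquiv.prodAssoc R A (↥U) WU).symm.prodCongr (LinearEquiv.refl R WV)).trans
    (((e.prodCongr (LinearEquiv.refl R WU)).prodCongr (LinearEquiv.refl R WV)).trans
    (((LinearEquiv.prodAssoc R B (↥V) WU).prodCongr (LinearEquiv.refl R WV)).trans
    ((((LinearEquiv.refl R B).prodCongr (LinearEquiv.prodComm R (↥V) WU)).prodCongr
        (LinearEquiv.refl R WV)).trans
    (((LinearEquiv.prodAssoc R B WU (↥V)).symm.prodCongr (LinearEquiv.refl R WV)).trans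
    ((LinearEquiv.prodAssoc R (B × WU) (↥V) WV).trans
    (((LinearEquiv.refl R (B × WU)).prodCongr av).trans
    (LinearEquiv.prodAssoc R B WU WV))))))))))

end Step

section Thread
variable {R : Type u} [Ring R]

/-- Thread a projective `W` through both ends of a SES (middle gains `W × W`). -/
def SESpkg.threadBoth {A P B : ModuleCat.{u} R} (S : SESpkg R A P B) (W : ModuleCat.{u} R)
    (hW : Module.Projective R W) :
    SESpkg R (ModuleCat.of R (↥A × ↥W)) (ModuleCat.of R (↥P × (↥W × ↥W)))
      (ModuleCat.of R (↥B × ↥W)) where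
  ι := LinearMap.prodMap S.ι (LinearMap.inl R ↥W ↥W)
  π := LinearMap.prodMap S.π (LinearMap.snd R ↥W ↥W)
  proj := by
    haveI := S.proj; haveI := hW
    exact inferInstanceAs (Module.Projective R (↥P × (↥W × ↥W)))
  inj := by
    rintro ⟨a, w⟩ ⟨a', w'⟩ hh
    have h1 := congrArg (fun x : ↥P × (↥W × ↥W) => x.1) hh
    have h2 := congrArg (fun x : ↥P × (↥W × ↥W) => x.2.1) hh
    exact Prod.ext (S.inj h1) h2
  surj := by
    rintro ⟨b, w⟩
    obtain ⟨p, hp⟩ := S.surj b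
    refine ⟨(p, (0, w)), ?_⟩
    show ((S.π p, w) : ↥B × ↥W) = (b, w)
    rw [hp]
  exact := by
    rintro ⟨p, w, w'⟩
    constructor
    · intro h0
      have hp : S.π p = 0 := congrArg Prod.fst h0
      have hw' : w' = 0 := congrArg Prod.snd h0
      obtain ⟨a, ha⟩ := (S.exact p).mp hp
      refine ⟨(a, w), ?_⟩
      show ((S.ι a, (w, 0)) : ↥P × (↥W × ↥W)) = (p, w, w')
      rw [ha, hw']
    · rintro ⟨⟨a, w₀⟩, ha⟩
      rw [← ha]
      show ((S.π (S.ι a), (0 : ↥W)) : ↥B × ↥W) = 0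
      rw [(S.exact (S.ι a)).mpr ⟨a, rfl⟩]
      rfl
  ext := by
    intro Q hQ f
    obtain ⟨h₁, hh₁⟩ := S.ext Q hQ (f ∘ₗ LinearMap.inl R ↥A ↥W)
    refine ⟨h₁ ∘ₗ LinearMap.fst R ↥P (↥W × ↥W) +
      (f ∘ₗ LinearMap.inr R ↥A ↥W) ∘ₗ (LinearMap.fst R ↥W ↥W) ∘ₗ
        LinearMap.snd R ↥P (↥W × ↥W), ?_⟩
    apply LinearMap.ext; rintro ⟨a, w⟩
    have e1 := congrArg (fun g => g a) hh₁
    simp only [LinearMap.comp_apply] at e1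
    show h₁ (S.ι a) + f (0, w) = f (a, w)
    rw [e1]
    show f (a, 0) + f (0, w) = f (a, w)
    rw [← map_add, Prod.mk_add_mk, add_zero, zero_add]

/-- Thread a projective `W` through the kernel side only. -/
def SESpkg.threadLeft {A P B : ModuleCat.{u} R} (S : SESpkg R A P B) (W : ModuleCat.{u} R)
    (hW : Module.Projective R W) :
    SESpkg R (ModuleCat.of R (↥A × ↥W)) (ModuleCat.of R (↥P × ↥W)) B where
  ι := LinearMap.prodMap S.ι LinearMap.id
  π := S.π ∘ₗ LinearMap.fst R ↥P ↥W
  proj := by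
    haveI := S.proj; haveI := hW
    exact inferInstanceAs (Module.Projective R (↥P × ↥W))
  inj := by
    rintro ⟨a, w⟩ ⟨a', w'⟩ hh
    exact Prod.ext (S.inj (congrArg (fun x : ↥P × ↥W => x.1) hh))
      (congrArg (fun x : ↥P × ↥W => x.2) hh)
  surj := by
    intro b
    obtain ⟨p, hp⟩ := S.surj b
    exact ⟨(p, 0), hp⟩
  exact := by
    rintro ⟨p, w⟩
    constructor
    · intro h0
      obtain ⟨a, ha⟩ := (S.exact p).mp h0
      exact ⟨(a, w), by show ((S.ι a, w) : ↥P × ↥W) = (p, w); rw [ha]⟩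
    · rintro ⟨⟨a, w₀⟩, ha⟩
      rw [← ha]
      exact (S.exact (S.ι a)).mpr ⟨a, rfl⟩
  ext := by
    intro Q hQ f
    obtain ⟨h₁, hh₁⟩ := S.ext Q hQ (f ∘ₗ LinearMap.inl R ↥A ↥W)
    refine ⟨h₁ ∘ₗ LinearMap.fst R ↥P ↥W +
      (f ∘ₗ LinearMap.inr R ↥A ↥W) ∘ₗ LinearMap.snd R ↥P ↥W, ?_⟩
    apply LinearMap.ext; rintro ⟨a, w⟩
    have e1 := congrArg (fun g => g a) hh₁
    simp only [LinearMap.comp_apply] at e1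
    show h₁ (S.ι a) + f (0, w) = f (a, w)
    rw [e1]
    show f (a, 0) + f (0, w) = f (a, w)
    rw [← map_add, Prod.mk_add_mk, add_zero, zero_add]

/-- Absorb a projective summand of the kernel into the middle term. -/
lemma absorbPkg {A W C E : ModuleCat.{u} R} (hW : Module.Projective R W)
    (S : SESpkg R (ModuleCat.of R (↥A × ↥W)) E C) :
    ∃ E' : ModuleCat.{u} R, Nonempty (SESpkg R A E' C) := by
  obtain ⟨h, hh⟩ := S.ext W hW (LinearMap.snd R ↥A ↥W)
  have hhx : ∀ x : ↥A × ↥W, h (S.ι x) = x.2 := by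
    intro x
    exact congrArg (fun g => g x) hh
  have hπι : ∀ x, S.π (S.ι x) = 0 := fun x => (S.exact _).mpr ⟨x, rfl⟩
  refine ⟨ModuleCat.of R ↥(LinearMap.ker h), ⟨?_⟩⟩
  have memι : ∀ a : ↥A, (S.ι ∘ₗ LinearMap.inl R ↥A ↥W) a ∈ LinearMap.ker h := by
    intro a
    rw [LinearMap.mem_ker]
    show h (S.ι ((a, 0) : ↥A × ↥W)) = 0
    rw [hhx ((a, 0) : ↥A × ↥W)]
  have memc : ∀ e : ↥E,
      ((LinearMap.id : ↥E →ₗ[R] ↥E) - S.ι ∘ₗ (LinearMap.inr R ↥A ↥W) ∘ₗ h) e ∈ LinearMap.ker h := by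
    intro e
    rw [LinearMap.mem_ker]
    show h (e - S.ι ((0, h e) : ↥A × ↥W)) = 0
    rw [map_sub, hhx ((0, h e) : ↥A × ↥W)]
    exact sub_self _
  refine
  { ι := LinearMap.codRestrict (LinearMap.ker h) (S.ι ∘ₗ LinearMap.inl R ↥A ↥W) memι
    π := S.π ∘ₗ (LinearMap.ker h).subtype
    proj := ?_
    inj := ?_
    surj := ?_
    exact := ?_
    ext := ?_ }
  · -- projectivity of ker h : split off from E
    haveI := S.proj
    exact Module.Projective.of_split (LinearMap.ker h).subtype
      (LinearMap.codRestrict (LinearMap.ker h)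
        ((LinearMap.id : ↥E →ₗ[R] ↥E) - S.ι ∘ₗ (LinearMap.inr R ↥A ↥W) ∘ₗ h) memc)
      (by
        apply LinearMap.ext
        rintro ⟨x, hx⟩
        apply Subtype.ext
        have hx0 : h x = 0 := hx
        show x - S.ι (((0 : ↥A), h x) : ↥A × ↥W) = x
        rw [hx0]
        show x - S.ι 0 = x
        rw [map_zero, sub_zero])
  · intro a a' hh'
    have := congrArg (fun x : ↥(LinearMap.ker h) => (x : ↥E)) hh'
    have h2 : S.ι ((a, 0) : ↥A × ↥W) = S.ι ((a', 0) : ↥A × ↥W) := this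
    exact congrArg Prod.fst (S.inj h2)
  · intro c
    obtain ⟨e, he⟩ := S.surj c
    refine ⟨⟨((LinearMap.id : ↥E →ₗ[R] ↥E) - S.ι ∘ₗ (LinearMap.inr R ↥A ↥W) ∘ₗ h) e, memc e⟩, ?_⟩
    show S.π (((LinearMap.id : ↥E →ₗ[R] ↥E) - S.ι ∘ₗ (LinearMap.inr R ↥A ↥W) ∘ₗ h) e) = c
    simp only [LinearMap.sub_apply, LinearMap.id_apply, LinearMap.comp_apply, map_sub]
    rw [hπι, sub_zero, he]
  · rintro ⟨x, hx⟩
    constructor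
    · intro h0
      have hx0 : h x = 0 := hx
      have hpx : S.π x = 0 := h0
      obtain ⟨⟨a, w⟩, ha⟩ := (S.exact x).mp hpx
      have hw : w = 0 := by
        have h3 := hhx ((a, w) : ↥A × ↥W)
        rw [ha] at h3
        exact h3.symm.trans hx0
      refine ⟨a, Subtype.ext ?_⟩
      show S.ι ((a, 0) : ↥A × ↥W) = x
      rw [← hw, ha]
    · rintro ⟨a, ha⟩
      have : (⟨x, hx⟩ : ↥(LinearMap.ker h)).val = S.ι ((a, 0) : ↥A × ↥W) := by
        rw [← ha]; rfl
      show S.π x = 0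
      rw [show x = S.ι ((a, 0) : ↥A × ↥W) from this, hπι]
  · intro Q hQ f
    obtain ⟨h₂, hh₂⟩ := S.ext Q hQ (f ∘ₗ LinearMap.fst R ↥A ↥W)
    refine ⟨h₂ ∘ₗ (LinearMap.ker h).subtype, ?_⟩
    ext a
    have e1 := congrArg (fun g => g ((a, 0) : ↥A × ↥W)) hh₂
    simp only [LinearMap.comp_apply] at e1 ⊢
    exact e1

end Thread

section Main
variable {R : Type u} [Ring R] {M : Type u} [AddCommGroup M] [Module R M]

lemma emod_toNat_succ (g : ℕ) (hg : 0 < g) (a : ℤ) :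
    ((a + 1) % (g:ℤ)).toNat = (((a % (g:ℤ)).toNat + 1)) % g := by
  have hgz : (g:ℤ) ≠ 0 := by exact_mod_cast hg.ne'
  have h1 : (a + 1) % (g:ℤ) = ((a % (g:ℤ)) + 1) % (g:ℤ) := by
    conv_lhs => rw [← Int.emod_add_mul_ediv a (g:ℤ)]
    rw [add_right_comm, Int.add_mul_emod_self_left]
  have h2 : 0 ≤ a % (g:ℤ) := Int.emod_nonneg a hgz
  have h3 : a % (g:ℤ) < g := Int.emod_lt_of_pos a (by exact_mod_cast hg)
  rcases eq_or_lt_of_le (by omega : a % (g:ℤ) + 1 ≤ (g:ℤ)) with he | hlt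
  · rw [h1, he, Int.emod_self]
    have : (a % (g:ℤ)).toNat + 1 = g := by omega
    rw [this, Nat.mod_self]
    rfl
  · rw [h1, Int.emod_eq_of_lt (by omega) hlt]
    have : ((a % (g:ℤ)).toNat + 1) % g = (a % (g:ℤ)).toNat + 1 := Nat.mod_eq_of_lt (by omega)
    omega

lemma mainStep (K g : ℕ) (hg : 0 < g)
    (hA : GoodChain R (K + g) M) (hB : GoodChain R K M) : GoodChain R g M := by
  classical
  obtain ⟨CA⟩ := hA
  obtain ⟨CB⟩ := hB
  -- ℕ-indexed extraction of chain A
  set NA : ℕ → ModuleCat.{u} R := fun t => CA.σ (1 + (t:ℤ)) with hNA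
  set PA : ℕ → ModuleCat.{u} R := fun t => CA.Pm (1 + (t:ℤ)) with hPA
  have pkgA : ∀ t : ℕ, SESpkg R (NA (t+1)) (PA t) (NA t) := fun t =>
    (CA.pkg (1 + (t:ℤ))).congr
      (mEqv (congrArg CA.σ (by push_cast; ring)))
      (LinearEquiv.refl R _) (LinearEquiv.refl R _)
  set NB : ℕ → ModuleCat.{u} R := fun t => CB.σ (1 + (t:ℤ)) with hNB
  set PB : ℕ → ModuleCat.{u} R := fun t => CB.Pm (1 + (t:ℤ)) with hPB
  have pkgB : ∀ t : ℕ, SESpkg R (NB (t+1)) (PB t) (NB t) := fun t =>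
    (CB.pkg (1 + (t:ℤ))).congr
      (mEqv (congrArg CB.σ (by push_cast; ring)))
      (LinearEquiv.refl R _) (LinearEquiv.refl R _)
  have isoA0 : M ≃ₗ[R] ↥(NA 0) := by
    refine (Classical.choice (CA.iso 0)).trans (mEqv (congrArg CA.σ ?_))
    push_cast; ring
  have isoAKg : M ≃ₗ[R] ↥(NA (K + g)) := by
    refine (Classical.choice (CA.iso 1)).trans (mEqv (congrArg CA.σ ?_))
    push_cast; ring
  have isoB0 : M ≃ₗ[R] ↥(NB 0) := by
    refine (Classical.choice (CB.iso 0)).trans (mEqv (congrArg CB.σ ?_))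
    push_cast; ring
  have isoBK : M ≃ₗ[R] ↥(NB K) := by
    refine (Classical.choice (CB.iso 1)).trans (mEqv (congrArg CB.σ ?_))
    push_cast; ring
  -- Schanuel comparison: M is stably isomorphic to NA g
  have st1 : ∀ t, StIso R ↥(NA t) ↥(NB t) :=
    chainStIso pkgA pkgB (StIso.ofIso ⟨isoA0.symm.trans isoB0⟩)
  have stK : StIso R ↥(NA K) ↥(NA 0) :=
    ((st1 K).congr_right isoBK.symm).congr_right isoA0
  have st3 : ∀ t, StIso R ↥(NA (K + t)) ↥(NA t) :=
    chainStIso (fun t => pkgA (K + t)) pkgA stK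
  have stFinal : StIso R M ↥(NA g) :=
    ((st3 g).congr_left isoAKg.symm)
  obtain ⟨W, hW, ⟨ψ⟩⟩ := stFinal.commonW
  -- now construct the period of length g
  by_cases hg1 : g = 1
  · -- single slot
    subst hg1
    have base : SESpkg R (NA 1) (PA 0) (ModuleCat.of R M) :=
      (pkgA 0).congr (LinearEquiv.refl R _) (LinearEquiv.refl R _) isoA0.symm
    have Lpre : SESpkg R (ModuleCat.of R (↥(NA 1) × ↥W)) (ModuleCat.of R (↥(PA 0) × ↥W))
        (ModuleCat.of R M) := base.threadLeft W hW
    have Lmid : SESpkg R (ModuleCat.of R (M × ↥W)) (ModuleCat.of R (↥(PA 0) × ↥W))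
        (ModuleCat.of R M) := Lpre.congr ψ.symm (LinearEquiv.refl R _) (LinearEquiv.refl R _)
    obtain ⟨E', ⟨Lfin⟩⟩ := absorbPkg (A := ModuleCat.of R M) hW Lmid
    exact ⟨⟨fun _ => ModuleCat.of R M, fun _ => E', fun _ => Lfin,
      fun k => ⟨LinearEquiv.refl R M⟩⟩⟩
  · have hg2 : 2 ≤ g := by omega
    have hg1' : g - 1 + 1 = g := Nat.succ_pred_eq_of_pos hg
    -- last slot
    have Lpre : SESpkg R (ModuleCat.of R (↥(NA (g-1+1)) × ↥W))
        (ModuleCat.of R (↥(PA (g-1)) × (↥W × ↥W))) (ModuleCat.of R (↥(NA (g-1)) × ↥W)) :=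
      (pkgA (g-1)).threadBoth W hW
    have aker : (↥(NA (g-1+1)) × ↥W) ≃ₗ[R] (M × ↥W) :=
      ((mEqv (congrArg NA hg1')).prodCongr (LinearEquiv.refl R ↥W)).trans ψ.symm
    have Lmid : SESpkg R (ModuleCat.of R (M × ↥W))
        (ModuleCat.of R (↥(PA (g-1)) × (↥W × ↥W))) (ModuleCat.of R (↥(NA (g-1)) × ↥W)) :=
      Lpre.congr aker (LinearEquiv.refl R _) (LinearEquiv.refl R _)
    obtain ⟨E', ⟨Lfin⟩⟩ := absorbPkg (A := ModuleCat.of R M) hW Lmid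
    -- the period data
    set Sig : ℕ → ModuleCat.{u} R := fun s =>
      if s = 0 then ModuleCat.of R M else ModuleCat.of R (↥(NA s) × ↥W) with hSig
    set Tm : ℕ → ModuleCat.{u} R := fun r =>
      if r = g - 1 then E' else if r = 0 then ModuleCat.of R (↥(PA 0) × ↥W)
        else ModuleCat.of R (↥(PA r) × (↥W × ↥W)) with hTm
    have slotPkg : ∀ r : ℕ, r < g → SESpkg R (Sig ((r+1) % g)) (Tm r) (Sig r) := by
      intro r hr
      by_cases h0 : r = 0
      · subst h0
        have base : SESpkg R (NA 1) (PA 0) (ModuleCat.of R M) :=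
          (pkgA 0).congr (LinearEquiv.refl R _) (LinearEquiv.refl R _) isoA0.symm
        have S0 : SESpkg R (ModuleCat.of R (↥(NA 1) × ↥W)) (ModuleCat.of R (↥(PA 0) × ↥W))
            (ModuleCat.of R M) := base.threadLeft W hW
        refine S0.congr (mEqv ?_) (mEqv ?_) (mEqv ?_)
        · simp [hSig, show (0+1) % g = 1 from Nat.mod_eq_of_lt hg2]
        · simp [hTm, show ¬ (0 = g - 1) by omega]
        · simp [hSig]
      · by_cases hlast : r = g - 1
        · subst hlast
          refine Lfin.congr (mEqv ?_) (mEqv ?_) (mEqv ?_)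
          · have h1 : (g - 1 + 1) % g = 0 := by
              rw [hg1']; exact Nat.mod_self g
            simp [hSig, h1]
          · simp [hTm]
          · simp [hSig, h0]
        · -- middle slot
          have base : SESpkg R (ModuleCat.of R (↥(NA (r+1)) × ↥W))
              (ModuleCat.of R (↥(PA r) × (↥W × ↥W))) (ModuleCat.of R (↥(NA r) × ↥W)) :=
            (pkgA r).threadBoth W hW
          refine base.congr (mEqv ?_) (mEqv ?_) (mEqv ?_)
          · simp [hSig, show (r+1) % g = r + 1 from Nat.mod_eq_of_lt (by omega)]
          · simp [hTm, hlast, h0]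
          · simp [hSig, h0]
    -- ℤ-assembly
    set rho : ℤ → ℕ := fun i => ((i - 1) % (g:ℤ)).toNat with hrho
    have hpos : (0:ℤ) < (g:ℤ) := by exact_mod_cast hg
    have hrholt : ∀ i, rho i < g := by
      intro i
      have h2 : 0 ≤ (i - 1) % (g:ℤ) := Int.emod_nonneg _ (by exact_mod_cast hg.ne')
      have h3 : (i - 1) % (g:ℤ) < g := Int.emod_lt_of_pos _ hpos
      show ((i - 1) % (g:ℤ)).toNat < g
      omega
    have hrhosucc : ∀ i, rho (i+1) = (rho i + 1) % g := by
      intro i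
      show ((i + 1 - 1) % (g:ℤ)).toNat = (((i-1) % (g:ℤ)).toNat + 1) % g
      have h4 : i + 1 - 1 = (i - 1) + 1 := by ring
      rw [h4]
      exact emod_toNat_succ g hg (i - 1)
    have hrho1 : ∀ k : ℤ, rho ((g:ℤ)*k+1) = 0 := by
      intro k
      show (((g:ℤ)*k+1-1) % (g:ℤ)).toNat = 0
      rw [add_sub_cancel_right, Int.mul_emod_right]
      rfl
    refine ⟨⟨fun i => Sig (rho i), fun i => Tm (rho i), fun i => ?_, fun k => ?_⟩⟩
    · exact (slotPkg (rho i) (hrholt i)).congr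
        (mEqv (congrArg Sig (hrhosucc i).symm)) (LinearEquiv.refl R _) (LinearEquiv.refl R _)
    · refine ⟨(mEqv (congrArg Sig (hrho1 k))).symm⟩

end Main

section Final
variable {R : Type u} [Ring R]

lemma gcd_arith (m n : ℕ) (hm : 0 < m) (hn : 0 < n) :
    ∃ a b : ℕ, 0 < a ∧ 0 < b ∧ a * m = b * n + Nat.gcd m n := by
  obtain ⟨m', hm'⟩ := Nat.gcd_dvd_left m n
  obtain ⟨n', hn'⟩ := Nat.gcd_dvd_right m n
  set g := Nat.gcd m n with hgdef
  have hg : 0 < g := Nat.gcd_pos_of_pos_left n hm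
  have hgm : g ≤ m := Nat.le_of_dvd hm ⟨m', hm'⟩
  have hbez : (g:ℤ) = m * Nat.gcdA m n + n * Nat.gcdB m n := Nat.gcd_eq_gcd_ab m n
  set x := Nat.gcdA m n with hx
  set y := Nat.gcdB m n with hy
  set t : ℤ := |x| + 2 with ht
  have hm'1 : 1 ≤ (m':ℤ) := by
    have : 0 < m' := by
      rcases Nat.eq_zero_or_pos m' with h | h
      · subst h; omega
      · exact h
    exact_mod_cast this
  have hn'1 : 1 ≤ (n':ℤ) := by
    have : 0 < n' := by
      rcases Nat.eq_zero_or_pos n' with h | h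
      · subst h; omega
      · exact h
    exact_mod_cast this
  have ht0 : 0 ≤ t := by
    have := abs_nonneg x
    omega
  have h1 : (m:ℤ) * n' = (n:ℤ) * m' := by
    have e1 : (m:ℤ) = g * m' := by exact_mod_cast hm'
    have e2 : (n:ℤ) = g * n' := by exact_mod_cast hn'
    rw [e1, e2]; ring
  have key : (m:ℤ) * (x + t*n') = (n:ℤ)*(t*(m':ℤ) - y) + g := by
    have h2 : (m:ℤ) * (t * n') = (n:ℤ) * (t * m') := by
      calc (m:ℤ) * (t * n') = t * ((m:ℤ) * n') := by ring
      _ = t * ((n:ℤ) * m') := by rw [h1]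
      _ = (n:ℤ) * (t * m') := by ring
    have h3 : (m:ℤ) * x + (n:ℤ) * y = g := hbez.symm
    calc (m:ℤ) * (x + t*n') = (m:ℤ)*x + (m:ℤ)*(t*n') := by ring
    _ = (m:ℤ)*x + (n:ℤ)*(t*m') := by rw [h2]
    _ = (n:ℤ)*(t*(m':ℤ) - y) + ((m:ℤ)*x + (n:ℤ)*y) := by ring
    _ = (n:ℤ)*(t*(m':ℤ) - y) + g := by rw [h3]
  have ha2 : 2 ≤ x + t*n' := by
    have h4 : t*1 ≤ t*n' := mul_le_mul_of_nonneg_left hn'1 ht0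
    have h5 : -|x| ≤ x := neg_abs_le x
    omega
  have hbpos : 0 < t*(m':ℤ) - y := by
    by_contra hb0
    push_neg at hb0
    have h6 : (n:ℤ)*(t*(m':ℤ) - y) ≤ 0 :=
      mul_nonpos_of_nonneg_of_nonpos (by positivity) hb0
    have h7 : 2*(m:ℤ) ≤ (m:ℤ) * (x + t*n') := by
      have : (0:ℤ) ≤ m := by positivity
      nlinarith
    have h8 : (g:ℤ) ≤ m := by exact_mod_cast hgm
    have h9 : 0 < (m:ℤ) := by exact_mod_cast hm
    linarith
  refine ⟨(x + t*n').toNat, (t*(m':ℤ) - y).toNat, by omega, by omega, ?_⟩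
  have e1 : ((x + t*n').toNat : ℤ) = x + t*n' := Int.toNat_of_nonneg (by omega)
  have e2 : (((t*(m':ℤ) - y).toNat) : ℤ) = t*(m':ℤ) - y := Int.toNat_of_nonneg (by omega)
  have : ((x + t*n').toNat : ℤ) * m = ((t*(m':ℤ) - y).toNat : ℤ) * n + g := by
    rw [e1, e2]
    linarith [key]
  exact_mod_cast this

end Final

/-- A module is both `m`- and `n`-strongly Gorenstein projective if and only if it is
`gcd m n`-strongly Gorenstein projective. -/
theorem nSGProjective_gcd (R : Type u) [Ring R] (m n : ℕ) (hm : 0 < m) (hn : 0 < n)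
    (M : Type u) [AddCommGroup M] [Module R M] :
    (IsNSGProjective R m M ∧ IsNSGProjective R n M) ↔
      IsNSGProjective R (Nat.gcd m n) M := by
  constructor
  · rintro ⟨hm', hn'⟩
    obtain ⟨a, b, ha, hb, hab⟩ := gcd_arith m n hm hn
    have hGam : GoodChain R (a*m) M := hm'.goodChain.of_dvd (dvd_mul_left m a)
    have hGbn : GoodChain R (b*n) M := hn'.goodChain.of_dvd (dvd_mul_left n b)
    have hKg : GoodChain R (b*n + Nat.gcd m n) M := hab ▸ hGam
    exact (mainStep (b*n) (Nat.gcd m n) (Nat.gcd_pos_of_pos_left n hm) hKg hGbn).isNSG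
  · intro h
    exact ⟨(h.goodChain.of_dvd (Nat.gcd_dvd_left m n)).isNSG,
      (h.goodChain.of_dvd (Nat.gcd_dvd_right m n)).isNSG⟩
end

section
/- Let M be an n-strongly Gorenstein projective module. Then M is projective if and only if Ext^i_R(M, M) = 0 for all 1 ≤ i ≤ n. -/
open CategoryTheory DirectSum

universe u

namespace NSGAux

lemma subsingleton_of_isZero {S : Type*} [Ring S] {X : ModuleCat.{u} S}
    (h : Limits.IsZero X) : Subsingleton X := by
  refine ⟨fun a b => ?_⟩
  have h1 : (𝟙 X : X ⟶ X) = 0 := h.eq_of_src _ _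
  calc a = (𝟙 X : X ⟶ X) a := rfl
    _ = (0 : X ⟶ X) a := by rw [h1]
    _ = (0 : X ⟶ X) b := by rw [show ((0 : X ⟶ X) a) = 0 from rfl]; rfl
    _ = (𝟙 X : X ⟶ X) b := by rw [h1]
    _ = b := rfl

variable {R : Type u} [Ring R] {M : Type u} [AddCommGroup M] [Module R M]
  (P : ℤ → ModuleCat.{u} R) (d : ∀ i : ℤ, P (i + 1) →ₗ[R] P i)
  (hproj : ∀ i, Module.Projective R (P i))
  (hex : ∀ i : ℤ, Function.Exact (d (i + 1)) (d i))
  (e0 : M ≃ₗ[R] LinearMap.range (d 0))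

noncomputable def theComplex : ChainComplex (ModuleCat.{u} R) ℕ :=
  ChainComplex.of (fun j => P ((j : ℤ) + 1)) (fun j => (ModuleCat.ofHom (d ((j:ℤ)+1)) : P ((j:ℤ)+1+1) ⟶ P ((j:ℤ)+1)))
    (fun j => by ext x; exact (hex ((j:ℤ)+1) _).mpr ⟨(show (P ((j:ℤ)+1+1+1) : Type u) from x), rfl⟩)

lemma theComplex_d (j : ℕ) :
    (theComplex P d hex).d (j+1) j = (ModuleCat.ofHom (d ((j:ℤ)+1)) : P ((j:ℤ)+1+1) ⟶ P ((j:ℤ)+1)) :=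
  ChainComplex.of_d (fun j : ℕ => P ((j : ℤ) + 1))
    (fun j : ℕ => (ModuleCat.ofHom (d ((j:ℤ)+1)) : P ((j:ℤ)+1+1) ⟶ P ((j:ℤ)+1))) j

noncomputable def g0 : (theComplex P d hex).X 0 ⟶ ModuleCat.of R M :=
  ModuleCat.ofHom (e0.symm.toLinearMap.comp (d 0).rangeRestrict : P ((0:ℤ)+1) →ₗ[R] M)

lemma g0_comp_zero : (theComplex P d hex).d 1 0 ≫ g0 P d hex e0 = 0 := by
  rw [theComplex_d]
  ext x
  show e0.symm ((d 0).rangeRestrict (d (0+1) x)) = 0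
  have h : (d 0).rangeRestrict (d (0+1) x) = 0 :=
    Subtype.ext ((hex 0 (d (0+1) x)).mpr ⟨x, rfl⟩)
  rw [h, map_zero]

lemma g0_surjective : Function.Surjective (g0 P d hex e0) :=
  e0.symm.surjective.comp (LinearMap.surjective_rangeRestrict (d 0))

lemma g0_exact : ∀ x : (theComplex P d hex).X 0, g0 P d hex e0 x = 0 →
    ∃ y : (P ((0:ℤ)+1+1) : Type u), d ((0:ℤ)+1) y = x := by
  intro x hx
  have h0 : (d 0).rangeRestrict x = 0 := by
    apply e0.symm.injective
    rw [map_zero]; exact hx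
  have hd0 : d 0 x = 0 := congrArg Subtype.val h0
  exact (hex 0 x).mp hd0

noncomputable def theRes : ProjectiveResolution (ModuleCat.of R M) where
  complex := theComplex P d hex
  projective j := (IsProjective.iff_projective _).mp (hproj _)
  π := (ChainComplex.toSingle₀Equiv _ _).symm
    ⟨g0 P d hex e0, g0_comp_zero P d hex e0⟩
  quasiIso := ⟨fun j => by
    cases j with
    | zero =>
      rw [ChainComplex.quasiIsoAt₀_iff, ShortComplex.quasiIso_iff_of_zeros']
      rotate_left
      · rfl
      · rfl
      · rfl
      refine (ShortComplex.exact_and_epi_g_iff_of_iso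
        (S₂ := ShortComplex.mk ((theComplex P d hex).d 1 0) (g0 P d hex e0)
          (g0_comp_zero P d hex e0))
        (ShortComplex.isoMk (Iso.refl _) (Iso.refl _) (Iso.refl _) (by simp)
          (by simp [ChainComplex.toSingle₀Equiv_symm_apply_f_zero]))).2 ⟨?_, ?_⟩
      · rw [ShortComplex.moduleCat_exact_iff]
        intro x hx
        obtain ⟨y, hy⟩ := g0_exact P d hex e0 (show ((theComplex P d hex).X 0 : Type u) from x)
          hx
        refine ⟨y, ?_⟩
        have hfd : (ShortComplex.mk ((theComplex P d hex).d 1 0) (g0 P d hex e0)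
            (g0_comp_zero P d hex e0)).f
            = (ModuleCat.ofHom (d ((0:ℤ)+1)) : P ((0:ℤ)+1+1) ⟶ P ((0:ℤ)+1)) := theComplex_d P d hex 0
        rw [hfd]
        exact hy
      · rw [ModuleCat.epi_iff_surjective]
        exact g0_surjective P d hex e0
    | succ m =>
      rw [quasiIsoAt_iff_exactAt']
      · rw [HomologicalComplex.exactAt_iff' _ (m+2) (m+1) m (by simp) (by simp)]
        rw [ShortComplex.moduleCat_exact_iff]
        intro x hx
        have hg : (HomologicalComplex.sc' (theComplex P d hex) (m + 2) (m + 1) m).g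
            = (ModuleCat.ofHom (d ((m:ℤ)+1)) : P ((m:ℤ)+1+1) ⟶ P ((m:ℤ)+1)) := theComplex_d P d hex m
        rw [hg] at hx
        have hx' : d ((m:ℤ)+1) (show (P ((m:ℤ)+1+1) : Type u) from x) = 0 := hx
        obtain ⟨y, hy⟩ := (hex ((m:ℤ)+1) (show (P ((m:ℤ)+1+1) : Type u) from x)).mp hx'
        refine ⟨y, ?_⟩
        have hf : (HomologicalComplex.sc' (theComplex P d hex) (m + 2) (m + 1) m).f
            = (ModuleCat.ofHom (d ((m:ℤ)+1+1)) : P ((m:ℤ)+1+1+1) ⟶ P ((m:ℤ)+1+1)) := theComplex_d P d hex (m+1)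
        rw [hf]
        exact hy
      · apply ChainComplex.exactAt_succ_single_obj⟩

end NSGAux

/-- An `n`-strongly Gorenstein projective module `M` is projective if and only if
`Ext^i(M, M) = 0` for all `1 ≤ i ≤ n`. -/
theorem nSGProjective_projective_iff_ext_self_vanishes (R : Type u) [Ring R] (n : ℕ)
    (hn : 0 < n) (M : Type u) [AddCommGroup M] [Module R M]
    (hM : IsNSGProjective R n M) :
    Module.Projective R M ↔ ∀ i : ℕ, 1 ≤ i → i ≤ n →
      Subsingleton (((Ext ℤ (ModuleCat.{u} R) i).obj
        (Opposite.op (ModuleCat.of R M))).obj (ModuleCat.of R M)) := by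
  obtain ⟨P, d, hproj, ⟨hex, hiso⟩, -⟩ := hM
  constructor
  · intro hMproj i hi1 _
    haveI : Projective (ModuleCat.of R M) := (IsProjective.iff_projective _).mp hMproj
    obtain ⟨j, rfl⟩ : ∃ j, i = j + 1 := ⟨i - 1, (Nat.succ_pred_eq_of_pos hi1).symm⟩
    exact NSGAux.subsingleton_of_isZero (isZero_Ext_succ_of_projective _ _ j)
  · intro hext
    obtain ⟨m, rfl⟩ : ∃ m, n = m + 1 := ⟨n - 1, (Nat.succ_pred_eq_of_pos hn).symm⟩
    have hiso' : ∀ i : ℤ, (∃ k : ℤ, i = ((m+1 : ℕ) : ℤ) * k) →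
        Nonempty (M ≃ₗ[R] LinearMap.range (d i)) := by
      rintro i ⟨k, rfl⟩; exact hiso k
    have e0 := (hiso' 0 ⟨0, by ring⟩).some
    have en := (hiso' (((m+1 : ℕ) : ℤ)) ⟨1, by ring⟩).some
    set res := NSGAux.theRes P d hproj hex e0 with hres
    set K := res.complex.linearYonedaObj ℤ (ModuleCat.of R M) with hK
    have hsub : Subsingleton (((Ext ℤ (ModuleCat.{u} R) (m+1)).obj
        (Opposite.op (ModuleCat.of R M))).obj (ModuleCat.of R M)) :=
      hext (m+1) (by omega) le_rfl
    have hzero : Limits.IsZero (K.homology (m+1)) :=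
      (@ModuleCat.isZero_of_subsingleton _ _ _ hsub).of_iso
        ((res.isoExt (m+1) (ModuleCat.of R M)).symm)
    have hKex : K.ExactAt (m+1) :=
      (HomologicalComplex.exactAt_iff_isZero_homology _ _).2 hzero
    rw [HomologicalComplex.exactAt_iff' _ m (m+1) (m+2) (by simp) (by simp),
      ShortComplex.moduleCat_exact_iff] at hKex
    set Q := res.complex with hQdef
    set gc : Q.X (m+1) ⟶ ModuleCat.of R M :=
      ModuleCat.ofHom (en.symm.toLinearMap.comp (d (((m+1:ℕ)):ℤ)).rangeRestrict :
        P ((((m+1:ℕ)):ℤ)+1) →ₗ[R] M) with hgcdef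
    have hgc : (HomologicalComplex.sc' K m (m+1) (m+2)).g gc = 0 := by
      have hd1 : (HomologicalComplex.sc' K m (m+1) (m+2)).g
          = ModuleCat.ofHom (Linear.leftComp ℤ (ModuleCat.of R M) (Q.d (m+2) (m+1))) :=
        ChainComplex.linearYonedaObj_d res.complex ℤ (ModuleCat.of R M) (m+1) (m+2)
      rw [hd1]
      show Q.d (m+2) (m+1) ≫ gc = 0
      have hd2 : Q.d (m+2) (m+1) = (ModuleCat.ofHom (d ((((m+1:ℕ)):ℤ)+1)) :
          P (((m+1:ℕ):ℤ)+1+1) ⟶ P (((m+1:ℕ):ℤ)+1)) := NSGAux.theComplex_d P d hex (m+1)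
      rw [hd2]
      ext x
      show en.symm ((d (((m+1:ℕ)):ℤ)).rangeRestrict (d ((((m+1:ℕ)):ℤ)+1) x)) = 0
      have hz : (d (((m+1:ℕ)):ℤ)).rangeRestrict (d ((((m+1:ℕ)):ℤ)+1) x) = 0 :=
        Subtype.ext ((hex (((m+1:ℕ)):ℤ) _).mpr ⟨x, rfl⟩)
      rw [hz, map_zero]
    obtain ⟨h, hh⟩ := hKex gc hgc
    let h' : Q.X m ⟶ ModuleCat.of R M := h
    have hd3 : (HomologicalComplex.sc' K m (m+1) (m+2)).f
        = ModuleCat.ofHom (Linear.leftComp ℤ (ModuleCat.of R M) (Q.d (m+1) m)) :=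
      ChainComplex.linearYonedaObj_d res.complex ℤ (ModuleCat.of R M) m (m+1)
    rw [hd3] at hh
    have hh' : Q.d (m+1) m ≫ h' = gc := hh
    have hd4 : Q.d (m+1) m = (ModuleCat.ofHom (d (((m+1:ℕ)):ℤ)) :
        P ((((m+1:ℕ)):ℤ)+1) ⟶ P (((m+1:ℕ)):ℤ)) := NSGAux.theComplex_d P d hex m
    rw [hd4] at hh'
    have hfac : ∀ x : (P ((((m+1:ℕ)):ℤ)+1) : Type u),
        h' (d (((m+1:ℕ)):ℤ) x) = en.symm ((d (((m+1:ℕ)):ℤ)).rangeRestrict x) :=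
      fun x => congrArg (fun f => ModuleCat.Hom.hom f x) hh'
    haveI : Module.Projective R (P (((m+1:ℕ)):ℤ)) := hproj _
    refine Module.Projective.of_split
      ((LinearMap.range (d (((m+1:ℕ)):ℤ))).subtype.comp en.toLinearMap)
      (show (P (((m+1:ℕ)):ℤ) : Type u) →ₗ[R] M from h'.hom) ?_
    refine LinearMap.ext fun x => ?_
    show h' ((en x : LinearMap.range (d (((m+1:ℕ)):ℤ))).val) = x
    obtain ⟨z, hz⟩ := (en x).2
    have e2 : h' ((en x).val) = h' (d (((m+1:ℕ)):ℤ) z) := by rw [hz]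
    have e4 : (d (((m+1:ℕ)):ℤ)).rangeRestrict z = en x := Subtype.ext hz
    rw [e2, hfac z, e4]
    exact en.symm_apply_apply x
end

section
/- Let M be an n-strongly Gorenstein projective module. If Ext^i_R(M, M) = 0 for every i ≥ 1, then M is projective. -/
open CategoryTheory DirectSum

universe u

section Aux

variable {R : Type u} [Ring R] {M : Type u} [AddCommGroup M] [Module R M]
  (P : ℤ → ModuleCat.{u} R) (d : ∀ i : ℤ, P (i + 1) →ₗ[R] P i)

theorem aux_main (hproj : ∀ i, Module.Projective R (P i))
    (hex : ∀ i : ℤ, Function.Exact (d (i + 1)) (d i))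
    (e0 : M ≃ₗ[R] LinearMap.range (d 0))
    (m : ℕ) (e1 : M ≃ₗ[R] LinearMap.range (d ((m : ℤ) + 1)))
    (hext : Subsingleton (((Ext ℤ (ModuleCat.{u} R) (m + 1)).obj
      (Opposite.op (ModuleCat.of R M))).obj (ModuleCat.of R M))) :
    Module.Projective R M := by
  classical
  -- d ∘ d = 0
  have hdd : ∀ (i : ℤ), (d i).comp (d (i + 1)) = 0 := fun i =>
    LinearMap.ext fun x => (hex i (d (i + 1) x)).mpr ⟨x, rfl⟩
  -- the chain complex ⋯ → P 2 → P 1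
  let Cx : ChainComplex (ModuleCat.{u} R) ℕ :=
    ChainComplex.of (fun i => P ((i : ℤ) + 1))
      (fun i => ModuleCat.ofHom (d ((i : ℤ) + 1) : P ((i : ℤ) + 1 + 1) →ₗ[R] P ((i : ℤ) + 1)))
      (fun i => ModuleCat.hom_ext (show ((d ((i : ℤ) + 1)).comp (d ((i : ℤ) + 1 + 1)) : _) = 0
        from hdd ((i : ℤ) + 1)))
  have hCxd : ∀ i : ℕ, Cx.d (i + 1) i =
      ModuleCat.ofHom (d ((i : ℤ) + 1) : P ((i : ℤ) + 1 + 1) →ₗ[R] P ((i : ℤ) + 1)) :=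
    fun i => ChainComplex.of_d (fun i : ℕ => P ((i : ℤ) + 1))
      (fun i => ModuleCat.ofHom (d ((i : ℤ) + 1) : P ((i : ℤ) + 1 + 1) →ₗ[R] P ((i : ℤ) + 1))) i
  -- the augmentation map
  let ε : Cx.X 0 ⟶ ModuleCat.of R M :=
    ModuleCat.ofHom (e0.symm.toLinearMap.comp (d 0).rangeRestrict : (P ((0:ℤ)+1) : Type u) →ₗ[R] M)
  have hεsurj : Function.Surjective ε :=
    e0.symm.surjective.comp (d 0).surjective_rangeRestrict
  have hε : Cx.d 1 0 ≫ ε = 0 := by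
    rw [hCxd 0]
    refine ModuleCat.hom_ext (LinearMap.ext fun x => ?_)
    show e0.symm ((d 0).rangeRestrict ((d ((0:ℤ)+1)) x)) = 0
    have : (d 0).rangeRestrict ((d ((0:ℤ)+1)) x) = 0 :=
      Subtype.ext ((hex 0 (d ((0:ℤ)+1) x)).mpr ⟨x, rfl⟩)
    rw [this, map_zero]
  -- exactness at ε : ker ε = range (Cx.d 1 0)
  have hεexact : ∀ x : Cx.X 0, ε x = 0 → ∃ y : Cx.X 1, (Cx.d 1 0) y = x := by
    intro x hx
    have hx0 : d 0 x = 0 := by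
      have : (d 0).rangeRestrict x = 0 := by
        apply e0.symm.injective
        rw [map_zero]; exact hx
      simpa using congrArg Subtype.val this
    obtain ⟨y, hy⟩ := (hex 0 x).mp hx0
    exact ⟨y, by rw [hCxd 0]; exact hy⟩
  -- instance: each term is projective
  have hprojX : ∀ i : ℕ, Projective (Cx.X i) := fun i =>
    (IsProjective.iff_projective _).mp (hproj ((i : ℤ) + 1))
  -- the projective resolution
  let res : ProjectiveResolution (ModuleCat.of R M) :=
    { complex := Cx
      projective := hprojX
      π := (ChainComplex.toSingle₀Equiv _ _).symm ⟨ε, hε⟩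
      quasiIso := ⟨fun i => by
        cases i with
        | zero =>
          rw [ChainComplex.quasiIsoAt₀_iff, ShortComplex.quasiIso_iff_of_zeros']
          rotate_left
          · rfl
          · rfl
          · rfl
          constructor
          · rw [ShortComplex.moduleCat_exact_iff]
            intro x hx
            refine hεexact x ?_
            have hx2 := hx
            simp [ChainComplex.toSingle₀Equiv_symm_apply_f_zero] at hx2
            exact hx2
          · rw [ModuleCat.epi_iff_surjective]
            intro y
            obtain ⟨x, hx⟩ := hεsurj y
            exact ⟨x, by simp [ChainComplex.toSingle₀Equiv_symm_apply_f_zero]; exact hx⟩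
        | succ i =>
          rw [quasiIsoAt_iff_exactAt']
          · rw [HomologicalComplex.exactAt_iff' _ (i + 2) (i + 1) i (by simp) (by simp),
              ShortComplex.moduleCat_exact_iff]
            intro x hx
            have hx' : d ((i : ℤ) + 1) x = 0 := by
              rw [show (HomologicalComplex.sc' Cx (i+2) (i+1) i).g = Cx.d (i+1) i from rfl,
                hCxd i] at hx
              exact hx
            obtain ⟨y, hy⟩ := (hex ((i : ℤ) + 1) (show (P ((i:ℤ)+1+1) : Type u) from x)).mp hx'
            refine ⟨y, ?_⟩
            rw [show (HomologicalComplex.sc' Cx (i+2) (i+1) i).f = Cx.d (i+2) (i+1) from rfl,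
              hCxd (i+1)]
            exact hy
          · apply ChainComplex.exactAt_succ_single_obj⟩ }
  -- the Hom complex Hom(Cx, M)
  let Y : CochainComplex (ModuleCat ℤ) ℕ := Cx.linearYonedaObj ℤ (ModuleCat.of R M)
  have hzero : Limits.IsZero (((Ext ℤ (ModuleCat.{u} R) (m + 1)).obj
      (Opposite.op (ModuleCat.of R M))).obj (ModuleCat.of R M)) :=
    @ModuleCat.isZero_of_subsingleton ℤ _ _ hext
  have hz2 : Limits.IsZero (Y.homology (m + 1)) :=
    Limits.IsZero.of_iso hzero (res.isoExt (m + 1) (ModuleCat.of R M)).symm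
  have hYex : Y.ExactAt (m + 1) :=
    (HomologicalComplex.exactAt_iff_isZero_homology _ _).mpr hz2
  rw [HomologicalComplex.exactAt_iff' _ m (m + 1) (m + 2) (by simp) (by simp),
    ShortComplex.moduleCat_exact_iff] at hYex
  -- the cocycle
  let πc : Cx.X (m + 1) ⟶ ModuleCat.of R M :=
    ModuleCat.ofHom (e1.symm.toLinearMap.comp (d ((m : ℤ) + 1)).rangeRestrict :
      (P ((m : ℤ) + 1 + 1) : Type u) →ₗ[R] M)
  have hcocycle : Cx.d (m + 2) (m + 1) ≫ πc = 0 := by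
    rw [hCxd (m + 1)]
    refine ModuleCat.hom_ext (LinearMap.ext fun x => ?_)
    show e1.symm ((d ((m : ℤ) + 1)).rangeRestrict
      ((d ((m : ℤ) + 1 + 1)) (show (P ((m:ℤ)+1+1+1) : Type u) from x))) = 0
    have : (d ((m : ℤ) + 1)).rangeRestrict ((d ((m : ℤ) + 1 + 1))
        (show (P ((m:ℤ)+1+1+1) : Type u) from x)) = 0 :=
      Subtype.ext ((hex ((m : ℤ) + 1) _).mpr ⟨_, rfl⟩)
    rw [this, map_zero]
  have hYex' : ∀ x₂ : Cx.X (m + 1) ⟶ ModuleCat.of R M, Cx.d (m + 2) (m + 1) ≫ x₂ = 0 →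
      ∃ x₁ : Cx.X m ⟶ ModuleCat.of R M, Cx.d (m + 1) m ≫ x₁ = x₂ := hYex
  obtain ⟨h, hh⟩ := hYex' πc hcocycle
  rw [hCxd m] at hh
  have hfun : ∀ y : (P ((m : ℤ) + 1 + 1) : Type u),
      h ((d ((m : ℤ) + 1)) y) = πc y := fun y =>
    congrArg (fun f : P ((m : ℤ) + 1 + 1) ⟶ ModuleCat.of R M => f y) hh
  let ι : M →ₗ[R] P ((m : ℤ) + 1) :=
    (LinearMap.range (d ((m : ℤ) + 1))).subtype.comp e1.toLinearMap
  haveI := hproj ((m : ℤ) + 1)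
  refine Module.Projective.of_split ι
    (h.hom : (P ((m : ℤ) + 1) : Type u) →ₗ[R] M) ?_
  refine LinearMap.ext fun x => ?_
  obtain ⟨y, hy⟩ := (e1 x).2
  show h ((e1 x : (P ((m : ℤ) + 1) : Type u))) = x
  rw [← hy]
  refine (hfun y).trans ?_
  show e1.symm ((d ((m : ℤ) + 1)).rangeRestrict y) = x
  rw [show (d ((m : ℤ) + 1)).rangeRestrict y = e1 x from Subtype.ext hy,
    LinearEquiv.symm_apply_apply]

end Aux

/-- An `n`-strongly Gorenstein projective module `M` with `Ext^i(M, M) = 0` for all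
`i ≥ 1` is projective. -/
theorem nSGProjective_projective_of_ext_self_vanishes (R : Type u) [Ring R] (n : ℕ)
    (hn : 0 < n) (M : Type u) [AddCommGroup M] [Module R M]
    (hM : IsNSGProjective R n M)
    (hext : ∀ i : ℕ, 1 ≤ i →
      Subsingleton (((Ext ℤ (ModuleCat.{u} R) i).obj
        (Opposite.op (ModuleCat.of R M))).obj (ModuleCat.of R M))) :
    Module.Projective R M := by
  have hM' : ∃ (P : ℤ → ModuleCat.{u} R) (d : ∀ i : ℤ, P (i + 1) →ₗ[R] P i),
      (∀ i, Module.Projective R (P i)) ∧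
      ((∀ i : ℤ, Function.Exact (d (i + 1)) (d i)) ∧
        ∀ k : ℤ, Nonempty (M ≃ₗ[R] LinearMap.range (d ((n : ℤ) * k)))) ∧
      IsHomExact R P d := hM
  obtain ⟨P, d, hproj, ⟨hex, hiso⟩, -⟩ := hM'
  obtain ⟨m, rfl⟩ : ∃ m, n = m + 1 := ⟨n - 1, (Nat.succ_pred_eq_of_pos hn).symm⟩
  obtain ⟨e0⟩ := hiso 0
  rw [mul_zero] at e0
  obtain ⟨e1⟩ := hiso 1
  rw [mul_one, show (((m + 1 : ℕ) : ℤ)) = (m : ℤ) + 1 by push_cast; ring] at e1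
  exact aux_main P d hproj hex e0 m e1 (hext (m + 1) (Nat.le_add_left 1 m))
end

section
/- The class of n-strongly Gorenstein projective modules is closed under arbitrary direct sums. -/
open CategoryTheory DirectSum

universe u

section Aux

variable {R : Type u} [Ring R] {ι : Type u}

theorem mem_range_mapRangeLM {β₁ β₂ : ι → Type u}
    [∀ i, AddCommGroup (β₁ i)] [∀ i, Module R (β₁ i)]
    [∀ i, AddCommGroup (β₂ i)] [∀ i, Module R (β₂ i)]
    (f : ∀ i, β₁ i →ₗ[R] β₂ i) (x : Π₀ i, β₂ i) :
    x ∈ LinearMap.range (DFinsupp.mapRange.linearMap f) ↔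
      ∀ i, x i ∈ LinearMap.range (f i) := by
  classical
  constructor
  · rintro ⟨y, rfl⟩ i
    exact ⟨y i, by simp⟩
  · intro h
    refine ⟨DFinsupp.mk x.support (fun i => (h i.1).choose), ?_⟩
    ext i
    simp only [DFinsupp.mapRange.linearMap_apply, DFinsupp.mapRange_apply, DFinsupp.mk_apply]
    split_ifs with hi
    · exact (h i).choose_spec
    · rw [map_zero]
      exact (DFinsupp.notMem_support_iff.mp hi).symm

theorem exact_mapRangeLM {β₁ β₂ β₃ : ι → Type u}
    [∀ i, AddCommGroup (β₁ i)] [∀ i, Module R (β₁ i)]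
    [∀ i, AddCommGroup (β₂ i)] [∀ i, Module R (β₂ i)]
    [∀ i, AddCommGroup (β₃ i)] [∀ i, Module R (β₃ i)]
    (f : ∀ i, β₁ i →ₗ[R] β₂ i) (g : ∀ i, β₂ i →ₗ[R] β₃ i)
    (h : ∀ i, Function.Exact (f i) (g i)) :
    Function.Exact (DFinsupp.mapRange.linearMap f) (DFinsupp.mapRange.linearMap g) := by
  rw [LinearMap.exact_iff]
  ext x
  rw [LinearMap.mem_ker, mem_range_mapRangeLM]
  rw [DFunLike.ext_iff]
  constructor
  · intro hx i
    have := hx i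
    simp only [DFinsupp.mapRange.linearMap_apply, DFinsupp.mapRange_apply,
      DFinsupp.zero_apply] at this
    exact ((h i) (x i)).mp this
  · intro hx i
    simp only [DFinsupp.mapRange.linearMap_apply, DFinsupp.mapRange_apply,
      DFinsupp.zero_apply]
    exact ((h i) (x i)).mpr (hx i)

theorem injective_mapRangeLM {β₁ β₂ : ι → Type u}
    [∀ i, AddCommGroup (β₁ i)] [∀ i, Module R (β₁ i)]
    [∀ i, AddCommGroup (β₂ i)] [∀ i, Module R (β₂ i)]
    (f : ∀ i, β₁ i →ₗ[R] β₂ i) (hf : ∀ i, Function.Injective (f i)) :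
    Function.Injective (DFinsupp.mapRange.linearMap f) := by
  intro x y hxy
  ext i
  apply hf i
  have := DFunLike.congr_fun hxy i
  simpa using this

theorem range_mapRangeLM_eq {β₁ β₂ β₃ : ι → Type u}
    [∀ i, AddCommGroup (β₁ i)] [∀ i, Module R (β₁ i)]
    [∀ i, AddCommGroup (β₂ i)] [∀ i, Module R (β₂ i)]
    [∀ i, AddCommGroup (β₃ i)] [∀ i, Module R (β₃ i)]
    (f : ∀ i, β₁ i →ₗ[R] β₂ i) (g : ∀ i, β₃ i →ₗ[R] β₂ i)
    (h : ∀ i, LinearMap.range (f i) = LinearMap.range (g i)) :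
    LinearMap.range (DFinsupp.mapRange.linearMap f) =
      LinearMap.range (DFinsupp.mapRange.linearMap g) := by
  ext x
  rw [mem_range_mapRangeLM, mem_range_mapRangeLM]
  simp_rw [h]

end Aux


/-- The class of `n`-strongly Gorenstein projective modules is closed under arbitrary
direct sums. -/
theorem nSGProjective_directSum (R : Type u) [Ring R] (n : ℕ) (hn : 0 < n)
    (ι : Type u) (M : ι → Type u) [∀ j, AddCommGroup (M j)] [∀ j, Module R (M j)]
    (hM : ∀ j, IsNSGProjective R n (M j)) :
    IsNSGProjective R n (⨁ j, M j) := by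
  classical
  choose P d hproj hper hhom using hM
  refine ⟨fun i => ModuleCat.of R (Π₀ j, (P j i : Type u)),
    fun i => DFinsupp.mapRange.linearMap (fun j => d j i), ?_, ⟨?_, ?_⟩, ?_⟩
  · intro i
    haveI : ∀ j, Module.Projective R (P j i) := fun j => hproj j i
    show Module.Projective R (Π₀ j, (P j i : Type u))
    infer_instance
  · intro i
    exact exact_mapRangeLM _ _ (fun j => (hper j).1 i)
  · intro k
    have e : ∀ j, M j ≃ₗ[R] LinearMap.range (d j ((n : ℤ) * k)) :=
      fun j => ((hper j).2 k).some
    set u : ∀ j, M j →ₗ[R] (P j ((n : ℤ) * k) : Type u) :=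
      fun j => (LinearMap.range (d j ((n : ℤ) * k))).subtype ∘ₗ (e j).toLinearMap with hu
    have hinj : Function.Injective (DFinsupp.mapRange.linearMap u) := by
      apply injective_mapRangeLM
      intro j
      exact (Submodule.injective_subtype _).comp (e j).injective
    have hrange : LinearMap.range (DFinsupp.mapRange.linearMap u) =
        LinearMap.range (DFinsupp.mapRange.linearMap (fun j => d j ((n : ℤ) * k))) := by
      apply range_mapRangeLM_eq
      intro j
      rw [hu, LinearMap.range_comp, LinearEquiv.range, Submodule.map_top,
        Submodule.range_subtype]
    exact ⟨(LinearEquiv.ofInjective _ hinj).trans (LinearEquiv.ofEq _ _ hrange)⟩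
  · intro Q hQ i
    show Function.Exact
      (fun g : (Π₀ j, (P j i : Type u)) →ₗ[R] (Q : Type u) =>
        g.comp (DFinsupp.mapRange.linearMap fun j => d j i))
      (fun g : (Π₀ j, (P j (i + 1) : Type u)) →ₗ[R] (Q : Type u) =>
        g.comp (DFinsupp.mapRange.linearMap fun j => d j (i + 1)))
    intro φ
    constructor
    · intro h0
      have hφj : ∀ j, ((φ.comp (DFinsupp.lsingle (M := fun j' => (P j' (i + 1) : Type u)) j))).comp (d j (i + 1)) = 0 := by
        intro j
        refine LinearMap.ext fun m => ?_
        have h0m := DFunLike.congr_fun h0 (DFinsupp.single j m)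
        simp only [LinearMap.comp_apply, DFinsupp.mapRange.linearMap_apply,
          DFinsupp.mapRange_single, LinearMap.zero_apply, DFinsupp.lsingle_apply] at h0m ⊢
        exact h0m
      have hex : ∀ j, ∃ ψj : (P j i : Type u) →ₗ[R] Q,
          ψj.comp (d j i) = φ.comp (DFinsupp.lsingle (M := fun j' => (P j' (i + 1) : Type u)) j) := by
        intro j
        exact (hhom j Q hQ i _).mp (hφj j)
      choose ψ hψ using hex
      refine ⟨DFinsupp.lsum ℕ ψ, ?_⟩
      refine DFinsupp.lhom_ext fun j m => ?_
      have := DFunLike.congr_fun (hψ j) m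
      simp only [LinearMap.comp_apply, DFinsupp.lsingle_apply] at this
      simp only [LinearMap.comp_apply, DFinsupp.mapRange.linearMap_apply,
        DFinsupp.mapRange_single, DFinsupp.lsum_single]
      exact this
    · rintro ⟨ψ, rfl⟩
      refine LinearMap.ext fun x => ?_
      have hx : (DFinsupp.mapRange.linearMap (fun j => d j i))
          ((DFinsupp.mapRange.linearMap (fun j => d j (i + 1))) x) = 0 := by
        ext j
        simp only [DFinsupp.mapRange.linearMap_apply, DFinsupp.mapRange_apply,
          DFinsupp.zero_apply]
        exact ((hper j).1 i).apply_apply_eq_zero _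
      show ψ ((DFinsupp.mapRange.linearMap (fun j => d j i))
          ((DFinsupp.mapRange.linearMap (fun j => d j (i + 1))) x)) = 0
      rw [hx, map_zero]
end

section
/- Write M = M̲ ⊕ P, where P is projective and M̲ has no nonzero projective direct summands. Then M is n-strongly Gorenstein projective if and only if M̲ is n-strongly Gorenstein projective. -/
open CategoryTheory DirectSum

universe u

section Back

variable {R : Type u} [Ring R] {n : ℕ} {M N P : Type u}
  [AddCommGroup M] [Module R M] [AddCommGroup N] [Module R N] [AddCommGroup P] [Module R P]

/-- the contractible complex map on `P × P`. -/
noncomputable def ep (R P : Type u) [Ring R] [AddCommGroup P] [Module R P] :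
    (P × P) →ₗ[R] (P × P) :=
  (LinearMap.snd R P P).prod 0

lemma ep_apply (x : P × P) : ep R P x = (x.2, 0) := rfl

lemma backward (e : M ≃ₗ[R] N × P) (hP : Module.Projective R P)
    (h : IsNSGProjective R n N) : IsNSGProjective R n M := by
  obtain ⟨G, d, h1, ⟨h2, h4⟩, h3⟩ := h
  haveI := hP
  haveI := fun i => h1 i
  refine ⟨fun i => ModuleCat.of R (↥(G i) × (P × P)),
    fun i => (d i).prodMap (ep R P), fun i => ?_, ⟨fun i => ?_, fun k => ?_⟩, ?_⟩
  · exact inferInstanceAs (Module.Projective R (↥(G i) × (P × P)))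
  · -- exactness
    intro x
    constructor
    · intro hx
      have hx1 : d i x.1 = 0 := congrArg Prod.fst hx
      have hx2 : ep R P x.2 = 0 := congrArg Prod.snd hx
      obtain ⟨y, hy⟩ := (h2 i x.1).mp hx1
      refine ⟨(y, (0, x.2.1)), ?_⟩
      have hx2' : x.2.2 = 0 := congrArg Prod.fst hx2
      show (d (i+1) y, ep R P (0, x.2.1)) = x
      rw [hy, ep_apply]
      exact Prod.ext rfl (Prod.ext rfl hx2'.symm)
    · rintro ⟨y, rfl⟩
      show (d i (d (i+1) y.1), ep R P (ep R P y.2)) = 0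
      have : d i (d (i+1) y.1) = 0 := (h2 i _).mpr ⟨y.1, rfl⟩
      rw [this, ep_apply, ep_apply]
      rfl
  · -- ranges
    obtain ⟨φ⟩ := h4 k
    -- F : M →ₗ target module
    let F : M →ₗ[R] (↥(G ((n:ℤ)*k)) × (P × P)) :=
      (((LinearMap.range (d ((n:ℤ)*k))).subtype.comp
          (φ.toLinearMap.comp (LinearMap.fst R N P))).comp e.toLinearMap).prod
        (((LinearMap.inl R P P).comp (LinearMap.snd R N P)).comp e.toLinearMap)
    have hFmem : ∀ x, F x ∈ LinearMap.range ((d ((n:ℤ)*k)).prodMap (ep R P)) := by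
      intro x
      obtain ⟨y, hy⟩ := (φ (e x).1).2
      refine ⟨(y, (0, (e x).2)), ?_⟩
      show (d _ y, ep R P (0, (e x).2)) = F x
      rw [hy, ep_apply]
      rfl
    have hFinj : Function.Injective F := by
      intro a b hab
      have h1' : (φ (e a).1 : ↥(G ((n:ℤ)*k))) = (φ (e b).1 : ↥(G ((n:ℤ)*k))) :=
        congrArg Prod.fst hab
      have h2' : ((e a).2, (0:P)) = ((e b).2, (0:P)) := congrArg Prod.snd hab
      have hfst : (e a).1 = (e b).1 := φ.injective (Subtype.ext h1')
      have hsnd : (e a).2 = (e b).2 := congrArg Prod.fst h2'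
      exact e.injective (Prod.ext hfst hsnd)
    have hFsurj : ∀ z ∈ LinearMap.range ((d ((n:ℤ)*k)).prodMap (ep R P)), ∃ x, F x = z := by
      rintro z ⟨y, rfl⟩
      obtain ⟨a, ha⟩ := φ.surjective ⟨d _ y.1, ⟨y.1, rfl⟩⟩
      refine ⟨e.symm (a, y.2.2), ?_⟩
      show ((φ ((e (e.symm (a, y.2.2))).1) : ↥(G ((n:ℤ)*k))), ((e (e.symm (a, y.2.2))).2, (0:P)))
        = (d _ y.1, ep R P y.2)
      rw [e.apply_symm_apply, ep_apply]
      exact Prod.ext (by rw [ha]) rfl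
    refine ⟨LinearEquiv.ofBijective (F.codRestrict _ hFmem) ⟨?_, ?_⟩⟩
    · intro a b hab
      exact hFinj (Subtype.ext_iff.mp hab)
    · rintro ⟨z, hz⟩
      obtain ⟨x, hx⟩ := hFsurj z hz
      exact ⟨x, Subtype.ext hx⟩
  · -- hom exactness
    intro Q hQ i
    intro h
    constructor
    · intro hcomp
      have h1' : (h.comp (LinearMap.inl R _ _)).comp (d (i+1)) = 0 := by
        refine LinearMap.ext fun y => ?_
        have := DFunLike.congr_fun hcomp (y, 0)
        simp [ep_apply, LinearMap.prodMap_apply] at this ⊢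
        exact this
      obtain ⟨g1, hg1⟩ := (h3 Q hQ i (h.comp (LinearMap.inl R _ _))).mp h1'
      refine ⟨(g1.comp (LinearMap.fst R _ _)) +
        ((h.comp (LinearMap.inr R _ _)).comp ((LinearMap.inr R P P).comp
          ((LinearMap.fst R P P).comp (LinearMap.snd R (↥(G i)) (P × P))))), ?_⟩
      refine LinearMap.ext fun yc => ?_
      show g1 (d i yc.1) + h (0, (0, yc.2.2)) = h yc
      have e1 : g1 (d i yc.1) = h (yc.1, (0 : P × P)) := DFunLike.congr_fun hg1 yc.1
      have e2 : h ((0 : ↥(G (i+1))), (yc.2.1, (0:P))) = 0 := by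
        have := DFunLike.congr_fun hcomp ((0 : ↥(G (i+1+1))), ((0:P), yc.2.1))
        have h0 : ((0 : ↥(G (i+1))), (yc.2.1, (0:P))) =
            ((d (i+1)).prodMap (ep R P)) ((0 : ↥(G (i+1+1))), ((0:P), yc.2.1)) := by
          rw [LinearMap.prodMap_apply, map_zero, ep_apply]
        rw [h0]
        exact this
      have hsum : yc = (yc.1, (0 : P × P)) +
          (((0 : ↥(G (i+1))), (yc.2.1, (0:P))) + ((0 : ↥(G (i+1))), ((0:P), yc.2.2))) := by
        have key : ∀ (a : ↥(G (i+1))) (b c : P),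
            ((a, (b, c)) : ↥(G (i+1)) × P × P) = (a, (0 : P × P)) +
              (((0 : ↥(G (i+1))), (b, (0:P))) + ((0 : ↥(G (i+1))), ((0:P), c))) := by
          intro a b c
          refine Prod.ext (by simp) (Prod.ext (by simp) (by simp))
        exact key yc.1 yc.2.1 yc.2.2
      rw [e1]
      conv_rhs => rw [hsum]
      rw [map_add, map_add, e2, zero_add]
    · rintro ⟨g, rfl⟩
      refine LinearMap.ext fun y => ?_
      show g ((d i (d (i+1) y.1)), ep R P (ep R P y.2)) = 0
      have h1' : d i (d (i+1) y.1) = 0 := (h2 i _).mpr ⟨y.1, rfl⟩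
      rw [h1', ep_apply, ep_apply]
      show g (0, (0,0)) = 0
      rw [show ((0:↥(G i)), ((0:P),(0:P))) = 0 from rfl, map_zero]

end Back

section Fwd

variable {R : Type u} [Ring R] {n : ℕ} {M N P : Type u}
  [AddCommGroup M] [Module R M] [AddCommGroup N] [Module R N] [AddCommGroup P] [Module R P]

/-- auxiliary: complex data with syzygies `M` at positions `n*k + s`. -/
def Sprop (R : Type u) [Ring R] (n : ℕ) (M : Type u) [AddCommGroup M] [Module R M]
    (s : ℤ) : Prop :=
  ∃ (G : ℤ → ModuleCat.{u} R) (d : ∀ i : ℤ, G (i+1) →ₗ[R] G i),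
    (∀ i, Module.Projective R (G i)) ∧ (∀ i, Function.Exact (d (i+1)) (d i)) ∧
    IsHomExact R G d ∧ ∀ k : ℤ, Nonempty (M ≃ₗ[R] LinearMap.range (d ((n:ℤ)*k + s)))

lemma rangeCongr {X : Type u} [AddCommGroup X] [Module R X]
    (G : ℤ → ModuleCat.{u} R) (d : ∀ i : ℤ, G (i+1) →ₗ[R] G i) {i j : ℤ} (h : i = j)
    (H : Nonempty (X ≃ₗ[R] LinearMap.range (d i))) :
    Nonempty (X ≃ₗ[R] LinearMap.range (d j)) := by subst h; exact H

lemma Sprop_step {s : ℤ} (h : Sprop R n M s) : Sprop R n M (s - 1) := by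
  obtain ⟨G, d, h1, h2, h3, h4⟩ := h
  refine ⟨fun j => G (j+1), fun i => d (i+1), fun i => h1 (i+1), fun i => h2 (i+1),
    fun Q hQ i => h3 Q hQ (i+1), fun k => ?_⟩
  exact rangeCongr G d (show (n:ℤ)*k + s = (n:ℤ)*k + (s-1) + 1 from by ring) (h4 k)

lemma Sprop_of (h : IsNSGProjective R n M) : Sprop R n M 0 := by
  obtain ⟨G, d, h1, ⟨h2, h4⟩, h3⟩ := h
  refine ⟨G, d, h1, h2, h3, fun k => ?_⟩
  exact rangeCongr G d (show (n:ℤ)*k = (n:ℤ)*k + 0 from by ring) (h4 k)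

lemma Sprop_shifted (hn : 0 < n) (h : IsNSGProjective R n M) :
    ∃ (G : ℤ → ModuleCat.{u} R) (d : ∀ i : ℤ, G (i+1) →ₗ[R] G i),
      (∀ i, Module.Projective R (G i)) ∧ (∀ i, Function.Exact (d (i+1)) (d i)) ∧
      IsHomExact R G d ∧ ∀ k : ℤ, Nonempty (M ≃ₗ[R] LinearMap.range (d ((n:ℤ)*k + 1))) := by
  have H : ∀ m : ℕ, Sprop R n M (0 - (m:ℤ)) := by
    intro m
    induction m with
    | zero => simpa using Sprop_of h
    | succ k ih =>
        have := Sprop_step ih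
        rwa [show (0 - (k:ℤ)) - 1 = 0 - ((k+1 : ℕ) : ℤ) from by push_cast; ring] at this
  obtain ⟨G, d, h1, h2, h3, h4⟩ := H (n - 1)
  refine ⟨G, d, h1, h2, h3, fun k => ?_⟩
  refine rangeCongr G d (show (n:ℤ)*(k+1) + (0 - ((n-1 : ℕ) : ℤ)) = (n:ℤ)*k + 1 from ?_) (h4 (k+1))
  have hc : ((n-1 : ℕ) : ℤ) = (n:ℤ) - 1 := by omega
  rw [hc]; ring

lemma core (e : M ≃ₗ[R] N × P) (hP : Module.Projective R P)
    (G : ℤ → ModuleCat.{u} R) (d : ∀ i : ℤ, G (i+1) →ₗ[R] G i)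
    (hproj : ∀ i, Module.Projective R (G i))
    (hex : ∀ i, Function.Exact (d (i+1)) (d i))
    (hhom : IsHomExact R G d)
    (hiso : ∀ k : ℤ, Nonempty (M ≃ₗ[R] LinearMap.range (d ((n:ℤ)*k + 1)))) :
    IsNSGProjective R n N := by
  classical
  haveI := hP
  set A : ℤ → Prop := fun j => ((n:ℤ)) ∣ (j - 1) with hA
  have hAmul : ∀ k : ℤ, A ((n:ℤ)*k + 1) := fun k => ⟨k, by ring⟩
  have hAiso : ∀ j, A j → Nonempty (M ≃ₗ[R] LinearMap.range (d j)) := by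
    intro j hj
    obtain ⟨k, hk⟩ := hj
    exact rangeCongr G d (show (n:ℤ)*k + 1 = j from by omega) (hiso k)
  have hdd : ∀ i (x : ↥(G (i+1+1))), d i (d (i+1) x) = 0 := fun i x => (hex i _).mpr ⟨x, rfl⟩
  -- the key local data at positions `j ≡ 1 [ZMOD n]`
  have key : ∀ j, A j → ∃ (ρj : ↥(G j) →ₗ[R] P) (tj : P →ₗ[R] ↥(G j)) (νj : N →ₗ[R] ↥(G j))
      (sj : P →ₗ[R] ↥(G (j+1))),
      (∀ p, ρj (tj p) = p) ∧ (∀ p, tj p ∈ LinearMap.range (d j)) ∧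
      (∀ p, ρj (d j (sj p)) = p) ∧
      (∀ x, ρj (νj x) = 0) ∧ (∀ x, νj x ∈ LinearMap.range (d j)) ∧
      Function.Injective νj ∧
      (∀ z, z ∈ LinearMap.range (d j) → ρj z = 0 → ∃ x, νj x = z) := by
    intro j hj
    obtain ⟨φ⟩ := hAiso j hj
    set π : M →ₗ[R] P := (LinearMap.snd R N P).comp e.toLinearMap with hπ
    set h1 : ↥(G (j+1)) →ₗ[R] P := (π.comp φ.symm.toLinearMap).comp (d j).rangeRestrict
      with hh1
    have hcomp0 : h1.comp (d (j+1)) = 0 := by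
      refine LinearMap.ext fun y => ?_
      have hz : (d j).rangeRestrict (d (j+1) y) = 0 :=
        Subtype.ext ((hex j _).mpr ⟨y, rfl⟩)
      show π (φ.symm ((d j).rangeRestrict (d (j+1) y))) = 0
      rw [hz, map_zero, map_zero]
    haveI hPc : Module.Projective R ↥(ModuleCat.of R P) := hP
    have hexQ := hhom (ModuleCat.of R P) hPc j
    obtain ⟨ρj, hρj⟩ := (hexQ h1).mp hcomp0
    have hρval : ∀ z : ↥(LinearMap.range (d j)), ρj z.1 = π (φ.symm z) := by
      rintro ⟨z, y, hy⟩
      have h2' : ρj (d j y) = π (φ.symm ((d j).rangeRestrict y)) := DFunLike.congr_fun hρj y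
      have h3' : (d j).rangeRestrict y = ⟨z, y, hy⟩ := Subtype.ext hy
      calc ρj z = ρj (d j y) := by rw [hy]
        _ = π (φ.symm ((d j).rangeRestrict y)) := h2'
        _ = π (φ.symm ⟨z, y, hy⟩) := by rw [h3']
    set tj : P →ₗ[R] ↥(G j) := ((LinearMap.range (d j)).subtype.comp φ.toLinearMap).comp
        (e.symm.toLinearMap.comp (LinearMap.inr R N P)) with htj
    set νj : N →ₗ[R] ↥(G j) := ((LinearMap.range (d j)).subtype.comp φ.toLinearMap).comp
        (e.symm.toLinearMap.comp (LinearMap.inl R N P)) with hνj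
    have htval : ∀ p, tj p = ((φ (e.symm (0, p)) : ↥(LinearMap.range (d j))) : ↥(G j)) :=
      fun p => rfl
    have hνval : ∀ x, νj x = ((φ (e.symm (x, 0)) : ↥(LinearMap.range (d j))) : ↥(G j)) :=
      fun x => rfl
    have hρt : ∀ p, ρj (tj p) = p := by
      intro p
      have h4' := hρval (φ (e.symm (0, p)))
      rw [φ.symm_apply_apply] at h4'
      rw [htval p, h4', hπ]
      show (e (e.symm (0, p))).2 = p
      rw [e.apply_symm_apply]
    have htmem : ∀ p, tj p ∈ LinearMap.range (d j) := fun p => (φ (e.symm (0, p))).2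
    have hρν : ∀ x, ρj (νj x) = 0 := by
      intro x
      have h4' := hρval (φ (e.symm (x, 0)))
      rw [φ.symm_apply_apply] at h4'
      rw [hνval x, h4', hπ]
      show (e (e.symm (x, 0))).2 = 0
      rw [e.apply_symm_apply]
    have hνmem : ∀ x, νj x ∈ LinearMap.range (d j) := fun x => (φ (e.symm (x, 0))).2
    have hνinj : Function.Injective νj := by
      intro a b hab
      rw [hνval a, hνval b] at hab
      have h5' := φ.injective (Subtype.ext hab)
      have h6' := e.symm.injective h5'
      exact congrArg Prod.fst h6'
    have hνsurj : ∀ z, z ∈ LinearMap.range (d j) → ρj z = 0 → ∃ x, νj x = z := by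
      intro z hz hz0
      have h4' := hρval ⟨z, hz⟩
      rw [hz0] at h4'
      set m := φ.symm ⟨z, hz⟩ with hm
      have hm2 : (e m).2 = 0 := h4'.symm
      refine ⟨(e m).1, ?_⟩
      rw [hνval]
      have : ((e m).1, (0 : P)) = e m := Prod.ext rfl hm2.symm
      rw [this, e.symm_apply_apply, hm, φ.apply_symm_apply]
    -- section sj
    have hσsurj : Function.Surjective (ρj.comp (d j)) := by
      intro p
      obtain ⟨y, hy⟩ := htmem p
      refine ⟨y, ?_⟩
      show ρj (d j y) = p
      rw [hy, hρt]
    obtain ⟨sj, hsj⟩ := Module.projective_lifting_property (ρj.comp (d j))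
      LinearMap.id hσsurj
    have hρds : ∀ p, ρj (d j (sj p)) = p := fun p => DFunLike.congr_fun hsj p
    exact ⟨ρj, tj, νj, sj, hρt, htmem, hρds, hρν, hνmem, hνinj, hνsurj⟩
  choose ρ0 t0 ν0 s0 hρt ht0mem hρds hρν hν0mem hνinj hνsurj using key
  -- global ρ
  set ρ : ∀ j : ℤ, ↥(G j) →ₗ[R] P := fun j => if h : A j then ρ0 j h else 0 with hρ
  have hρpos : ∀ j (h : A j), ρ j = ρ0 j h := fun j h => dif_pos h
  have hρneg : ∀ j, ¬ A j → ρ j = 0 := fun j h => dif_neg h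
  set K : ∀ i : ℤ, Submodule R ↥(G (i+1)) :=
    fun i => LinearMap.ker (ρ (i+1)) ⊓ LinearMap.ker ((ρ i).comp (d i)) with hK
  have memK : ∀ i (x : ↥(G (i+1))), x ∈ K i ↔ ρ (i+1) x = 0 ∧ ρ i (d i x) = 0 := by
    intro i x
    rw [hK]
    simp [Submodule.mem_inf, LinearMap.mem_ker]
  have hmaps : ∀ i, ∀ x ∈ K (i+1), d (i+1) x ∈ K i := by
    intro i x hx
    rw [memK] at hx ⊢
    exact ⟨hx.2, by rw [hdd i x, map_zero]⟩
  set d' : ∀ i : ℤ, ↥(K (i+1)) →ₗ[R] ↥(K i) := fun i => (d (i+1)).restrict (hmaps i) with hd'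
  have hd'val : ∀ i (ξ : ↥(K (i+1))), (d' i ξ : ↥(G (i+1))) = d (i+1) ξ.1 := fun i ξ => rfl
  -- corrections to kill ρ at the top
  have hkill : ∀ j (x : ↥(G (j+1))), ∃ x', ρ (j+1) x' = 0 ∧ d j x' = d j x := by
    intro j x
    by_cases h : A (j+1)
    · refine ⟨x - t0 (j+1) h (ρ (j+1) x), ?_, ?_⟩
      · rw [map_sub, hρpos (j+1) h, hρt (j+1) h, sub_self]
      · have hz : d j (t0 (j+1) h (ρ (j+1) x)) = 0 := by
          obtain ⟨y, hy⟩ := ht0mem (j+1) h (ρ (j+1) x)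
          exact (hex j _).mpr ⟨y, hy⟩
        rw [map_sub, hz, sub_zero]
    · exact ⟨x, by rw [hρneg _ h]; rfl, rfl⟩
  -- pseudo-sections w
  have hwex : ∀ i, ∃ w : (P × P) →ₗ[R] ↥(G (i+1)),
      (∀ x : ↥(G (i+1)), x - w (ρ (i+1) x, ρ i (d i x)) ∈ K i) ∧
      (∀ p : P, d i (w (p, 0)) = 0) := by
    intro i
    by_cases h1 : A (i+1) <;> by_cases h0 : A i
    · -- both
      set t := t0 (i+1) h1
      set s := s0 i h0
      have hdt : ∀ p, d i (t p) = 0 := by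
        intro p
        obtain ⟨y, hy⟩ := ht0mem (i+1) h1 p
        exact (hex i _).mpr ⟨y, hy⟩
      have hρt' : ∀ x, ρ (i+1) (t x) = x := by
        intro x; rw [hρpos (i+1) h1]; exact hρt (i+1) h1 x
      have hρds' : ∀ x, ρ i (d i (s x)) = x := by
        intro x; rw [hρpos i h0]; exact hρds i h0 x
      refine ⟨t.comp (LinearMap.fst R P P) +
        (s - t.comp ((ρ (i+1)).comp s)).comp (LinearMap.snd R P P), fun x => ?_, fun p => ?_⟩
      · rw [memK]
        have happ : ∀ a b : P, (t.comp (LinearMap.fst R P P) +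
            (s - t.comp ((ρ (i+1)).comp s)).comp (LinearMap.snd R P P)) (a, b)
            = t a + (s b - t (ρ (i+1) (s b))) := fun a b => rfl
        rw [happ]
        constructor
        · simp [map_sub, map_add, hρt', hρds', hdt]
        · simp [map_sub, map_add, hρt', hρds', hdt]
      · show d i (t p + (s 0 - t (ρ (i+1) (s 0)))) = 0
        rw [map_zero s, map_zero (ρ (i+1)), map_zero t, sub_zero, add_zero]
        exact hdt p
    · -- A (i+1) only
      set t := t0 (i+1) h1
      have hdt : ∀ p, d i (t p) = 0 := by
        intro p
        obtain ⟨y, hy⟩ := ht0mem (i+1) h1 p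
        exact (hex i _).mpr ⟨y, hy⟩
      have hρt' : ∀ x, ρ (i+1) (t x) = x := by
        intro x; rw [hρpos (i+1) h1]; exact hρt (i+1) h1 x
      refine ⟨t.comp (LinearMap.fst R P P), fun x => ?_, fun p => ?_⟩
      · rw [memK]
        constructor
        · show ρ (i+1) (x - t (ρ (i+1) x)) = 0
          rw [map_sub, hρt', sub_self]
        · rw [hρneg i h0]
          rfl
      · show d i (t p) = 0
        exact hdt p
    · -- A i only
      set s := s0 i h0
      have hρds' : ∀ x, ρ i (d i (s x)) = x := by
        intro x; rw [hρpos i h0]; exact hρds i h0 x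
      refine ⟨s.comp (LinearMap.snd R P P), fun x => ?_, fun p => ?_⟩
      · rw [memK]
        constructor
        · rw [hρneg (i+1) h1]
          rfl
        · show ρ i (d i (x - s (ρ i (d i x)))) = 0
          rw [map_sub, map_sub, hρds', sub_self]
      · show d i (s 0) = 0
        rw [map_zero, map_zero]
    · refine ⟨0, fun x => ?_, fun p => ?_⟩
      · rw [memK]
        rw [hρneg (i+1) h1, hρneg i h0]
        exact ⟨rfl, rfl⟩
      · show d i ((0 : (P × P) →ₗ[R] ↥(G (i+1))) (p, 0)) = 0
        rw [LinearMap.zero_apply, map_zero]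
  choose w hw1 hw3 using hwex
  have hwK : ∀ i (x : ↥(G (i+1))), x ∈ K i → w i (ρ (i+1) x, ρ i (d i x)) = 0 := by
    intro i x hx
    rw [memK] at hx
    rw [hx.1, hx.2]
    exact map_zero (w i)
  -- projectivity of the kernels
  have hKproj : ∀ i, Module.Projective R ↥(K i) := by
    intro i
    haveI := hproj (i+1)
    refine Module.Projective.of_split (K i).subtype
      (LinearMap.codRestrict (K i)
        (LinearMap.id - (w i).comp ((ρ (i+1)).prod ((ρ i).comp (d i))))
        (fun x => hw1 i x)) ?_
    refine LinearMap.ext fun x => Subtype.ext ?_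
    show (x : ↥(G (i+1))) - w i (ρ (i+1) x.1, ρ i (d i x.1)) = x.1
    rw [hwK i x.1 x.2, sub_zero]
  -- exactness of the new complex
  have hexact' : ∀ i, Function.Exact (d' (i+1)) (d' i) := by
    intro i ξ
    constructor
    · intro h0
      have h0v : d (i+1) ξ.1 = 0 := congrArg Subtype.val h0
      obtain ⟨y, hy⟩ := (hex (i+1) ξ.1).mp h0v
      obtain ⟨y', hy'1, hy'2⟩ := hkill (i+1+1) y
      have hmem : y' ∈ K (i+1+1) := by
        rw [memK]
        refine ⟨hy'1, ?_⟩
        rw [hy'2, hy]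
        exact ((memK (i+1) ξ.1).mp ξ.2).1
      exact ⟨⟨y', hmem⟩, Subtype.ext (by show d (i+1+1) y' = ξ.1; rw [hy'2, hy])⟩
    · rintro ⟨η, rfl⟩
      exact Subtype.ext (hdd (i+1) η.1)
  -- the syzygies of the new complex
  have hrange : ∀ k : ℤ, Nonempty (N ≃ₗ[R] LinearMap.range (d' ((n:ℤ)*k))) := by
    intro k
    have hA1 : A ((n:ℤ)*k + 1) := hAmul k
    set ν : N →ₗ[R] ↥(G ((n:ℤ)*k + 1)) := ν0 ((n:ℤ)*k + 1) hA1 with hν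
    have hν0 : ∀ x, ρ ((n:ℤ)*k + 1) (ν x) = 0 := by
      intro x; rw [hρpos _ hA1]; exact hρν _ hA1 x
    have hdν : ∀ x, d ((n:ℤ)*k) (ν x) = 0 := by
      intro x
      obtain ⟨y, hy⟩ := hν0mem _ hA1 x
      exact (hex ((n:ℤ)*k) _).mpr ⟨y, hy⟩
    have hmemK : ∀ x, ν x ∈ K ((n:ℤ)*k) := by
      intro x
      rw [memK]
      exact ⟨hν0 x, by rw [hdν x, map_zero]⟩
    have hmemrange : ∀ x, (⟨ν x, hmemK x⟩ : ↥(K ((n:ℤ)*k))) ∈ LinearMap.range (d' ((n:ℤ)*k)) := by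
      intro x
      obtain ⟨y, hy⟩ := hν0mem _ hA1 x
      obtain ⟨y', hy'1, hy'2⟩ := hkill ((n:ℤ)*k + 1) y
      have hyK : y' ∈ K ((n:ℤ)*k + 1) := by
        rw [memK]
        refine ⟨hy'1, ?_⟩
        rw [hy'2, hy]
        exact hν0 x
      exact ⟨⟨y', hyK⟩, Subtype.ext (show (d ((n:ℤ)*k+1) y' : ↥(G ((n:ℤ)*k+1))) = ν x from by
        rw [hy'2, hy])⟩
    set F : N →ₗ[R] ↥(LinearMap.range (d' ((n:ℤ)*k))) :=
      LinearMap.codRestrict _ (LinearMap.codRestrict (K ((n:ℤ)*k)) ν hmemK) hmemrange with hF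
    have hFinj : Function.Injective F := by
      intro a b hab
      have : ν a = ν b := congrArg Subtype.val (congrArg Subtype.val hab)
      exact hνinj _ hA1 this
    have hFsurj : Function.Surjective F := by
      rintro ⟨⟨z, hzK⟩, ξ, hξ⟩
      have h3 : d ((n:ℤ)*k + 1) ξ.1 = z := congrArg Subtype.val hξ
      have hzr : z ∈ LinearMap.range (d ((n:ℤ)*k + 1)) := ⟨ξ.1, h3⟩
      have h2 := ((memK ((n:ℤ)*k + 1) ξ.1).mp ξ.2).2
      rw [h3] at h2
      have hz0' : ρ0 ((n:ℤ)*k + 1) hA1 z = 0 := by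
        rw [← hρpos _ hA1]
        exact h2
      obtain ⟨x, hx⟩ := hνsurj ((n:ℤ)*k + 1) hA1 z hzr hz0'
      exact ⟨x, Subtype.ext (Subtype.ext hx)⟩
    exact ⟨LinearEquiv.ofBijective F ⟨hFinj, hFsurj⟩⟩
  -- hom-exactness of the new complex
  have hhom' : ∀ (Q : ModuleCat.{u} R), Module.Projective R Q → ∀ i : ℤ,
      Function.Exact (fun g : ↥(K i) →ₗ[R] Q => g.comp (d' i))
        (fun g : ↥(K (i+1)) →ₗ[R] Q => g.comp (d' (i+1))) := by
    intro Q hQ i h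
    constructor
    · intro hcomp
      -- retraction of `G (i+1+1)` onto `K (i+1)`
      set r : ↥(G (i+1+1)) →ₗ[R] ↥(K (i+1)) :=
        LinearMap.codRestrict (K (i+1))
          (LinearMap.id - (w (i+1)).comp ((ρ (i+1+1)).prod ((ρ (i+1)).comp (d (i+1)))))
          (fun x => hw1 (i+1) x) with hr
      have hrval : ∀ x : ↥(G (i+1+1)),
          (r x : ↥(G (i+1+1))) = x - w (i+1) (ρ (i+1+1) x, ρ (i+1) (d (i+1) x)) :=
        fun x => rfl
      have hrK : ∀ x : ↥(G (i+1+1)), x ∈ K (i+1) → (r x : ↥(G (i+1+1))) = x := by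
        intro x hx
        rw [hrval, hwK (i+1) x hx, sub_zero]
      set hb : ↥(G (i+1+1)) →ₗ[R] Q := h.comp r with hhb
      set ψ : P →ₗ[R] Q :=
        (hb.comp (d (i+1+1))).comp ((w (i+1+1)).comp (LinearMap.inr R P P)) with hψ
      have claim1 : ∀ y : ↥(G (i+1+1+1)),
          hb (d (i+1+1) y) = ψ (ρ (i+1+1) (d (i+1+1) y)) := by
        intro y
        set c := w (i+1+1) (ρ (i+1+1+1) y, ρ (i+1+1) (d (i+1+1) y)) with hc
        have hyc : y - c ∈ K (i+1+1) := hw1 (i+1+1) y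
        have hsplit : hb (d (i+1+1) y) = hb (d (i+1+1) (y - c)) + hb (d (i+1+1) c) := by
          rw [← map_add, ← map_add, sub_add_cancel]
        have hz1 : hb (d (i+1+1) (y - c)) = 0 := by
          have hmem1 : d (i+1+1) (y - c) ∈ K (i+1) := hmaps (i+1) _ hyc
          have hrid : r (d (i+1+1) (y - c)) = ⟨d (i+1+1) (y - c), hmem1⟩ :=
            Subtype.ext (hrK _ hmem1)
          show h (r (d (i+1+1) (y - c))) = 0
          rw [hrid]
          have hd'eq : d' (i+1) ⟨y - c, hyc⟩ = ⟨d (i+1+1) (y - c), hmem1⟩ := Subtype.ext rfl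
          rw [← hd'eq]
          exact DFunLike.congr_fun hcomp ⟨y - c, hyc⟩
        have hz2 : hb (d (i+1+1) c) = ψ (ρ (i+1+1) (d (i+1+1) y)) := by
          have hcsplit : c = w (i+1+1) (ρ (i+1+1+1) y, 0) +
              w (i+1+1) (0, ρ (i+1+1) (d (i+1+1) y)) := by
            rw [hc, ← map_add]
            congr 1
            exact Prod.ext (by simp) (by simp)
          rw [hcsplit, map_add, map_add, hw3 (i+1+1) _, map_zero, zero_add]
          rfl
        rw [hsplit, hz1, zero_add, hz2]
      set hh2 : ↥(G (i+1+1)) →ₗ[R] Q := hb - ψ.comp (ρ (i+1+1)) with hhh2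
      have hcomp2 : hh2.comp (d (i+1+1)) = 0 := by
        refine LinearMap.ext fun y => ?_
        show hb (d (i+1+1) y) - ψ (ρ (i+1+1) (d (i+1+1) y)) = 0
        rw [claim1 y, sub_self]
      obtain ⟨gb, hgb⟩ := (hhom Q hQ (i+1) hh2).mp hcomp2
      refine ⟨gb.comp (K i).subtype, ?_⟩
      refine LinearMap.ext fun ξ => ?_
      show gb ((d' i ξ : ↥(G (i+1)))) = h ξ
      rw [hd'val]
      have h5 : gb (d (i+1) ξ.1) = hh2 ξ.1 := DFunLike.congr_fun hgb ξ.1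
      rw [h5]
      show hb ξ.1 - ψ (ρ (i+1+1) ξ.1) = h ξ
      have h6 : ρ (i+1+1) ξ.1 = 0 := ((memK (i+1) ξ.1).mp ξ.2).1
      rw [h6, map_zero, sub_zero]
      show h (r ξ.1) = h ξ
      congr 1
      exact Subtype.ext (hrK ξ.1 ξ.2)
    · rintro ⟨g, rfl⟩
      refine LinearMap.ext fun ξ => ?_
      show g (d' i (d' (i+1) ξ)) = 0
      have : d' i (d' (i+1) ξ) = 0 := Subtype.ext (hdd (i+1) ξ.1)
      rw [this, map_zero]
  -- assemble
  exact ⟨fun i => ModuleCat.of R ↥(K i), d', hKproj, ⟨hexact', hrange⟩, hhom'⟩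

end Fwd


/-- If `M = M̲ ⊕ P` with `P` projective and `M̲` having no nonzero projective direct
summands, then `M` is `n`-strongly Gorenstein projective iff so is `M̲`. -/
theorem nSGProjective_iff_reduced_part (R : Type u) [Ring R] (n : ℕ) (hn : 0 < n)
    (M N P : Type u) [AddCommGroup M] [Module R M] [AddCommGroup N] [Module R N]
    [AddCommGroup P] [Module R P]
    (e : M ≃ₗ[R] N × P) (hP : Module.Projective R P)
    (hN : ∀ Q : Submodule R N, (∃ Q' : Submodule R N, IsCompl Q Q') →
      Module.Projective R Q → Q = ⊥) :
    IsNSGProjective R n M ↔ IsNSGProjective R n N := by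
  constructor
  · intro h
    obtain ⟨G, d, h1, h2, h3, h4⟩ := Sprop_shifted hn h
    exact core e hP G d h1 h2 h3 h4
  · intro h
    exact backward e hP h
end

section
/- If M and N are projectively equivalent modules (i.e., M ⊕ P ≅ N ⊕ Q for some projective modules P, Q), then M is n-strongly Gorenstein projective if and only if N is n-strongly Gorenstein projective. -/
open CategoryTheory DirectSum

universe u

universe v

private lemma exists_shift' {β : ℤ → Sort v} (G : ∀ i : ℤ, β (i + 1)) :
    ∃ f : ∀ j : ℤ, β j, ∀ i : ℤ, f (i + 1) = G i := by
  have key : ∀ (a b : ℤ) (h : a = b) (hb : a + 1 = b + 1),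
      (hb ▸ G a : β (b+1)) = G b := by
    rintro a b rfl hb; rfl
  exact ⟨fun j => (sub_add_cancel j 1) ▸ G (j - 1),
    fun i => key (i + 1 - 1) i (add_sub_cancel_right i 1) (sub_add_cancel (i+1) 1)⟩

section Lemmas

variable {R : Type u} [Ring R]

private lemma isNSG_congr {n : ℕ} {M M' : Type u} [AddCommGroup M] [Module R M]
    [AddCommGroup M'] [Module R M'] (e : M ≃ₗ[R] M') :
    IsNSGProjective R n M → IsNSGProjective R n M' := by
  rintro ⟨P, d, hP, ⟨hex, hsyz⟩, hhe⟩
  exact ⟨P, d, hP, ⟨hex, fun k => ⟨e.symm.trans (hsyz k).some⟩⟩, hhe⟩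

private lemma isNSG_prod {n : ℕ} {M : Type u} [AddCommGroup M] [Module R M]
    (Q : ModuleCat.{u} R) (hQ : Module.Projective R Q) :
    IsNSGProjective R n M → IsNSGProjective R n (M × Q) := by
  rintro ⟨P, d, hP, ⟨hex, hsyz⟩, hhe⟩
  -- the contractible complex on Q × Q with differential (x, y) ↦ (y, 0)
  let e : (Q × Q) →ₗ[R] (Q × Q) := (LinearMap.inl R Q Q).comp (LinearMap.snd R Q Q)
  have he_apply : ∀ z : Q × Q, e z = (z.2, 0) := fun z => rfl
  refine ⟨fun j => ModuleCat.of R (P j × (Q × Q)),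
    fun i => (d i).prodMap e, ?_, ⟨?_, ?_⟩, ?_⟩
  · intro i
    haveI := hP i
    exact inferInstanceAs (Module.Projective R ((P i) × (Q × Q)))
  · -- exactness
    intro i
    dsimp only
    intro y
    constructor
    · intro hy
      have h1 : d i y.1 = 0 := congrArg Prod.fst hy
      have h2 : (y.2.2, (0 : Q)) = 0 := congrArg Prod.snd hy
      obtain ⟨x₁, hx₁⟩ := (hex i y.1).mp h1
      refine ⟨(x₁, (0, y.2.1)), ?_⟩
      have h3 : y.2.2 = 0 := congrArg Prod.fst h2
      refine Prod.ext ?_ ?_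
      · simpa [LinearMap.prodMap_apply] using hx₁
      · refine Prod.ext ?_ ?_
        · rfl
        · exact h3.symm
    · rintro ⟨x, rfl⟩
      have h0 : d i (d (i+1) x.1) = 0 := (hex i _).mpr ⟨x.1, rfl⟩
      refine Prod.ext ?_ ?_
      · simpa [LinearMap.prodMap_apply] using h0
      · refine Prod.ext ?_ ?_ <;> rfl
  · -- syzygy
    intro k
    dsimp only
    obtain ⟨φ⟩ := hsyz k
    set i := (n : ℤ) * k with hi
    let F : (M × Q) →ₗ[R] (P i × (Q × Q)) :=
      ((LinearMap.range (d i)).subtype.comp φ.toLinearMap).prodMap (LinearMap.inl R Q Q)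
    have hFinj : Function.Injective F := by
      intro a b hab
      have h1 := congrArg Prod.fst hab
      have h2 := congrArg Prod.snd hab
      simp only [F, LinearMap.prodMap_apply, LinearMap.comp_apply,
        Submodule.subtype_apply, LinearMap.inl_apply] at h1 h2
      have ha1 : a.1 = b.1 := φ.injective (Subtype.ext h1)
      have ha2 : a.2 = b.2 := congrArg Prod.fst h2
      exact Prod.ext ha1 ha2
    have hFrange : LinearMap.range F = LinearMap.range ((d i).prodMap e) := by
      apply le_antisymm
      · rintro _ ⟨⟨m, w⟩, rfl⟩
        obtain ⟨x, hx⟩ := (φ m).2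
        refine ⟨(x, (0, w)), ?_⟩
        refine Prod.ext ?_ ?_
        · simpa [F, LinearMap.prodMap_apply] using hx
        · refine Prod.ext ?_ ?_ <;> rfl
      · rintro _ ⟨⟨x, w⟩, rfl⟩
        refine ⟨(φ.symm ⟨d i x, ⟨x, rfl⟩⟩, w.2), ?_⟩
        refine Prod.ext ?_ ?_
        · simp [F, LinearMap.prodMap_apply]
        · refine Prod.ext ?_ ?_ <;> rfl
    exact ⟨(LinearEquiv.ofInjective F hFinj).trans (LinearEquiv.ofEq _ _ hFrange)⟩
  · -- Hom-exactness
    intro Q' hQ' i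
    dsimp only
    intro h
    constructor
    · intro hh
      have hh' : ∀ x, h (((d (i+1)).prodMap e) x) = 0 := fun x => LinearMap.congr_fun hh x
      have h1 : (h.comp (LinearMap.inl R (P (i+1)) (Q × Q))).comp (d (i+1)) = 0 := by
        ext x
        have := hh' (x, 0)
        rw [LinearMap.prodMap_apply, he_apply] at this
        exact this
      obtain ⟨g₁, hg₁⟩ := (hhe Q' hQ' i _).mp h1
      let g₂ : (Q × Q) →ₗ[R] Q' :=
        (h.comp (LinearMap.inr R (P (i+1)) (Q × Q))).comp
          ((LinearMap.inr R Q Q).comp (LinearMap.fst R Q Q))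
      refine ⟨g₁.coprod g₂, ?_⟩
      apply LinearMap.ext; intro y
      have hy2 : h (0, (y.2.1, 0)) = 0 := by
        have := hh' (0, (0, y.2.1))
        simpa [LinearMap.prodMap_apply, he_apply] using this
      have hcomp : g₁ (d i y.1) = h (y.1, 0) := LinearMap.congr_fun hg₁ y.1
      have lhs1 : (g₁.coprod g₂) (((d i).prodMap e) y)
          = g₁ (d i y.1) + h (0, (0, y.2.2)) := by
        simp only [g₂, LinearMap.coprod_apply, LinearMap.prodMap_apply,
          LinearMap.comp_apply, LinearMap.inr_apply, LinearMap.fst_apply]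
        rfl
      have hsum : h y = h (y.1, 0) + h (0, (y.2.1, 0)) + h (0, (0, y.2.2)) := by
        rw [← map_add, ← map_add]
        congr 1
        refine Prod.ext ?_ (Prod.ext ?_ ?_)
        · show y.1 = y.1 + 0 + 0
          rw [add_zero, add_zero]
        · show y.2.1 = 0 + y.2.1 + 0
          rw [zero_add, add_zero]
        · show y.2.2 = 0 + 0 + y.2.2
          rw [zero_add, zero_add]
      show (g₁.coprod g₂) (((d i).prodMap e) y) = h y
      rw [lhs1, hcomp, hsum, hy2, add_zero]
    · rintro ⟨g, rfl⟩
      apply LinearMap.ext; intro x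
      have h0 : d i (d (i+1) x.1) = 0 := (hex i _).mpr ⟨x.1, rfl⟩
      have hz : ((d i).prodMap e) (((d (i+1)).prodMap e) x) = 0 := by
        refine Prod.ext ?_ ?_
        · simpa [LinearMap.prodMap_apply] using h0
        · refine Prod.ext ?_ ?_ <;> rfl
      show g (((d i).prodMap e) (((d (i+1)).prodMap e) x)) = 0
      rw [hz, map_zero]

-- removal lemma body (to be appended to defs + aux)
private lemma isNSG_remove {n : ℕ} {N : Type u} [AddCommGroup N] [Module R N]
    (Q : ModuleCat.{u} R) (hQ : Module.Projective R Q) :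
    IsNSGProjective R n (N × Q) → IsNSGProjective R n N := by
  rintro ⟨P, d, hP, ⟨hex, hsyz⟩, hhe⟩
  have hdd : ∀ (i : ℤ) (x : P (i+1+1)), d i (d (i+1) x) = 0 :=
    fun i x => (hex i _).mpr ⟨x, rfl⟩
  -- Choose, at every index, a decomposition of the syzygy together with a
  -- retraction `ρ` onto its `Q`-part and a map `v` detecting the `N`-part.
  have key : ∀ i : ℤ, ∃ (NSi : Submodule R (P i)) (ρi : P i →ₗ[R] P i)
      (vi : P (i+1) →ₗ[R] P (i+1)),
      (∀ x, ρi (ρi x) = ρi x) ∧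
      (∀ x, x ∈ NSi → x ∈ LinearMap.range ρi → x = 0) ∧
      (NSi ⊔ LinearMap.range ρi = LinearMap.range (d i)) ∧
      (∀ x ∈ NSi, ρi x = 0) ∧
      (∀ x, vi x = 0 ↔ d i x ∈ NSi) ∧
      (∀ x, d i (x - vi x) ∈ NSi) ∧
      ((n:ℤ) ∣ i → Nonempty (N ≃ₗ[R] NSi)) := by
    intro i
    by_cases hdvd : (n:ℤ) ∣ i
    · obtain ⟨k, rfl⟩ := hdvd
      obtain ⟨ψ⟩ := hsyz k
      haveI := hQ
      let em : (N × Q) →ₗ[R] P ((n:ℤ)*k) :=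
        (LinearMap.range (d ((n:ℤ)*k))).subtype.comp ψ.toLinearMap
      have hem_mem : ∀ p, em p ∈ LinearMap.range (d ((n:ℤ)*k)) := fun p => (ψ p).2
      have hem_inj : Function.Injective em :=
        (Submodule.injective_subtype _).comp ψ.injective
      let h₀ : P ((n:ℤ)*k+1) →ₗ[R] Q :=
        (LinearMap.snd R N Q).comp (ψ.symm.toLinearMap.comp (d ((n:ℤ)*k)).rangeRestrict)
      have h₀_apply : ∀ x, h₀ x = (ψ.symm ((d ((n:ℤ)*k)).rangeRestrict x)).2 :=
        fun x => rfl
      have hrr : ∀ (p : N × Q) (x : P ((n:ℤ)*k+1)), d ((n:ℤ)*k) x = em p → h₀ x = p.2 := by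
        intro p x hx
        have hz : (d ((n:ℤ)*k)).rangeRestrict x = ψ p := Subtype.ext hx
        rw [h₀_apply, hz, ψ.symm_apply_apply]
      have hker : ∀ x : P ((n:ℤ)*k+1), h₀ x = 0 →
          d ((n:ℤ)*k) x ∈ LinearMap.range (em.comp (LinearMap.inl R N Q)) := by
        intro x hx
        refine ⟨(ψ.symm ((d ((n:ℤ)*k)).rangeRestrict x)).1, ?_⟩
        have hz : (((ψ.symm ((d ((n:ℤ)*k)).rangeRestrict x)).1 : N), (0:Q))
            = ψ.symm ((d ((n:ℤ)*k)).rangeRestrict x) := by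
          refine Prod.ext rfl ?_
          rw [h₀_apply] at hx
          exact hx.symm
        show em ((ψ.symm ((d ((n:ℤ)*k)).rangeRestrict x)).1, (0:Q)) = d ((n:ℤ)*k) x
        rw [hz]
        show ((ψ (ψ.symm ((d ((n:ℤ)*k)).rangeRestrict x))) : P ((n:ℤ)*k)) = d ((n:ℤ)*k) x
        rw [ψ.apply_symm_apply]
        rfl
      have hsurj₀ : Function.Surjective h₀ := by
        intro b
        obtain ⟨x, hx⟩ := hem_mem (0, b)
        exact ⟨x, hrr (0, b) x hx⟩
      have hcomp0 : h₀.comp (d ((n:ℤ)*k+1)) = 0 := by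
        ext x
        have h1 : (d ((n:ℤ)*k)).rangeRestrict (d ((n:ℤ)*k+1) x) = 0 :=
          Subtype.ext (hdd ((n:ℤ)*k) x)
        show h₀ (d ((n:ℤ)*k+1) x) = 0
        rw [h₀_apply, h1, map_zero]
        rfl
      obtain ⟨ρ₀, hρ₀⟩ := (hhe (ModuleCat.of R Q) hQ ((n:ℤ)*k) h₀).mp hcomp0
      have hρ₀' : ∀ x, ρ₀ (d ((n:ℤ)*k) x) = h₀ x := fun x => LinearMap.congr_fun hρ₀ x
      have hρem : ∀ p, ρ₀ (em p) = p.2 := by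
        intro p
        obtain ⟨x, hx⟩ := hem_mem p
        rw [← hx, hρ₀']
        exact hrr p x hx
      obtain ⟨s, hs⟩ := Module.projective_lifting_property h₀ LinearMap.id hsurj₀
      have hs' : ∀ b, h₀ (s b) = b := fun b => LinearMap.congr_fun hs b
      refine ⟨LinearMap.range (em.comp (LinearMap.inl R N Q)),
        em.comp ((LinearMap.inr R N Q).comp ρ₀), s.comp h₀, ?_, ?_, ?_, ?_, ?_, ?_, ?_⟩
      · -- idempotent
        intro x
        show em (0, ρ₀ (em (0, ρ₀ x))) = em (0, ρ₀ x)
        rw [hρem (0, ρ₀ x)]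
      · -- N-part meets Q-part trivially
        rintro x ⟨a₁, ha₁⟩ ⟨y, hy⟩
        have : em (a₁, 0) = em (0, ρ₀ y) := by
          rw [show em (a₁, 0) = x from ha₁]
          rw [← hy]; rfl
        have h2 := hem_inj this
        have ha0 : a₁ = 0 := congrArg Prod.fst h2
        rw [← ha₁, ha0]
        show em (0, 0) = 0
        rw [show ((0:N), (0:Q)) = (0 : N × Q) from rfl, map_zero]
      · -- sup is the whole syzygy
        apply le_antisymm
        · apply sup_le
          · rintro _ ⟨p₁, rfl⟩
            exact hem_mem _
          · rintro _ ⟨y, rfl⟩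
            exact hem_mem _
        · rintro z ⟨x, rfl⟩
          rw [Submodule.mem_sup]
          set p := ψ.symm ((d ((n:ℤ)*k)).rangeRestrict x) with hp
          refine ⟨em (p.1, 0), ⟨p.1, rfl⟩, em (0, p.2), ⟨d ((n:ℤ)*k) x, ?_⟩, ?_⟩
          · show em (0, ρ₀ (d ((n:ℤ)*k) x)) = em (0, p.2)
            rw [hρ₀', h₀_apply]
          · rw [← map_add]
            show em ((p.1 + 0, 0 + p.2)) = d ((n:ℤ)*k) x
            rw [add_zero, zero_add]
            show ((ψ p) : P ((n:ℤ)*k)) = d ((n:ℤ)*k) x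
            rw [hp, ψ.apply_symm_apply]
            rfl
      · -- ρ kills the N-part
        rintro x ⟨p₁, rfl⟩
        show em (0, ρ₀ (em (p₁, 0))) = 0
        rw [hρem (p₁, 0)]
        show em (0, 0) = 0
        rw [show ((0:N), (0:Q)) = (0 : N × Q) from rfl, map_zero]
      · -- v detects the N-part
        intro x
        constructor
        · intro hx
          have h5 : h₀ (s (h₀ x)) = 0 := by
            rw [show s (h₀ x) = 0 from hx, map_zero]
          rw [hs'] at h5
          exact hker x h5
        · rintro ⟨p₁, hp₁⟩
          show s (h₀ x) = 0
          rw [hrr (p₁, 0) x hp₁.symm, map_zero]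
      · -- second v property
        intro x
        apply hker
        show h₀ (x - s (h₀ x)) = 0
        rw [map_sub, hs', sub_self]
      · -- the N-part is isomorphic to N
        intro _
        exact ⟨LinearEquiv.ofInjective (em.comp (LinearMap.inl R N Q))
          (hem_inj.comp LinearMap.inl_injective)⟩
    · refine ⟨LinearMap.range (d i), 0, 0, fun x => rfl, ?_, ?_, fun x _ => rfl, ?_, ?_,
        fun hd => absurd hd hdvd⟩
      · rintro x - ⟨y, rfl⟩
        rfl
      · rw [LinearMap.range_zero, sup_bot_eq]
      · intro x
        constructor
        · intro _
          exact ⟨x, rfl⟩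
        · intro _
          rfl
      · intro x
        rw [LinearMap.zero_apply, sub_zero]
        exact ⟨x, rfl⟩
  choose NS ρ v h1 h2 h3 h4 h6 h7 h9 using key
  obtain ⟨u, hu⟩ := exists_shift' (β := fun j => (P j : Type u) →ₗ[R] P j) v
  have H6 : ∀ (i : ℤ) (x : P (i+1)), u (i+1) x = 0 ↔ d i x ∈ NS i := by
    intro i x; rw [hu i]; exact h6 i x
  have H7 : ∀ (i : ℤ) (x : P (i+1)), d i (x - u (i+1) x) ∈ NS i := by
    intro i x; rw [hu i]; exact h7 i x
  have hNSle : ∀ i, NS i ≤ LinearMap.range (d i) := fun i => (h3 i) ▸ le_sup_left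
  have hρle : ∀ i, LinearMap.range (ρ i) ≤ LinearMap.range (d i) :=
    fun i => (h3 i) ▸ le_sup_right
  have hdzero : ∀ (i : ℤ) (x : P (i+1)), x ∈ LinearMap.range (d (i+1)) → d i x = 0 := by
    intro i x hx
    obtain ⟨y, hy⟩ := hx
    rw [← hy]
    exact hdd i y
  have hρd : ∀ (i : ℤ) (z : P (i+1)), d i (ρ (i+1) z) = 0 :=
    fun i z => hdzero i _ (hρle (i+1) ⟨z, rfl⟩)
  have hWd : ∀ (j : ℤ) (x : P j), x ∈ LinearMap.range (d j) → u j x = 0 := by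
    intro j
    obtain ⟨m, rfl⟩ : ∃ m : ℤ, m + 1 = j := ⟨j - 1, sub_add_cancel j 1⟩
    intro x hx
    refine (H6 m x).mpr ?_
    rw [hdzero m x hx]
    exact Submodule.zero_mem _
  let W : ∀ j : ℤ, Submodule R (P j) := fun j => LinearMap.ker (u j) ⊓ LinearMap.ker (ρ j)
  have hWmem : ∀ (j : ℤ) (x : P j), x ∈ W j ↔ u j x = 0 ∧ ρ j x = 0 := by
    intro j x
    exact Iff.rfl
  have hNSW : ∀ j, NS j ≤ W j := by
    intro j x hx
    rw [hWmem]
    exact ⟨hWd j x (hNSle j hx), h4 j x hx⟩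
  have hres : ∀ (i : ℤ), ∀ x ∈ W (i+1), d i x ∈ W i := by
    intro i x hx
    rw [hWmem] at hx ⊢
    exact ⟨hWd i _ ⟨x, rfl⟩, h4 i _ ((H6 i x).mp hx.1)⟩
  -- the canonical projection onto `W`
  have hπ : ∀ i : ℤ, ∃ π : P (i+1) →ₗ[R] W (i+1),
      ∀ x : P (i+1), (π x : P (i+1)) = (x - u (i+1) x) - ρ (i+1) (x - u (i+1) x) := by
    intro i
    have happ : ∀ x : P (i+1),
        ((LinearMap.id - ρ (i+1)).comp (LinearMap.id - u (i+1))) x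
          = (x - u (i+1) x) - ρ (i+1) (x - u (i+1) x) := by
      intro x
      simp [LinearMap.sub_apply]
    have hmemW : ∀ x : P (i+1),
        ((LinearMap.id - ρ (i+1)).comp (LinearMap.id - u (i+1))) x ∈ W (i+1) := by
      intro x
      rw [happ x, hWmem]
      constructor
      · apply (H6 i _).mpr
        have e1 : d i (ρ (i+1) (x - u (i+1) x)) = 0 := by
          apply hdzero i
          exact hρle (i+1) ⟨x - u (i+1) x, rfl⟩
        rw [map_sub, e1, sub_zero]
        exact H7 i x
      · rw [map_sub, h1, sub_self]
    refine ⟨LinearMap.codRestrict (W (i+1))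
      ((LinearMap.id - ρ (i+1)).comp (LinearMap.id - u (i+1))) hmemW, fun x => ?_⟩
    show ((LinearMap.id - ρ (i+1)).comp (LinearMap.id - u (i+1))) x
      = (x - u (i+1) x) - ρ (i+1) (x - u (i+1) x)
    exact happ x
  choose π hπval using hπ
  have hπW : ∀ (i : ℤ) (x : P (i+1)), x ∈ W (i+1) → (π i x : P (i+1)) = x := by
    intro i x hx
    rw [hWmem] at hx
    rw [hπval i x, hx.1, sub_zero, hx.2, sub_zero]
  have hrange : ∀ i : ℤ, LinearMap.range ((d i).restrict (hres i))
      = Submodule.comap (W i).subtype (NS i) := by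
    intro i
    apply le_antisymm
    · rintro _ ⟨⟨x, hx⟩, rfl⟩
      show d i x ∈ NS i
      exact (H6 i x).mp ((hWmem _ x).mp hx).1
    · rintro ⟨w, hwW⟩ hw
      have hw' : w ∈ NS i := hw
      obtain ⟨z, hz⟩ := hNSle i hw'
      refine ⟨⟨z - ρ (i+1) z, ?_⟩, ?_⟩
      · rw [hWmem]
        constructor
        · apply (H6 i _).mpr
          rw [map_sub, hρd i z, sub_zero, hz]
          exact hw'
        · rw [map_sub, h1, sub_self]
      · apply Subtype.ext
        show d i (z - ρ (i+1) z) = w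
        rw [map_sub, hρd i z, sub_zero]
        exact hz
  -- the new complex
  refine ⟨fun j => ModuleCat.of R (W j), fun i => (d i).restrict (hres i), ?_, ⟨?_, ?_⟩, ?_⟩
  · -- projectivity
    have hstep : ∀ i : ℤ, Module.Projective R (W (i+1)) := by
      intro i
      haveI := hP (i+1)
      refine Module.Projective.of_split (W (i+1)).subtype (π i) ?_
      apply LinearMap.ext
      rintro ⟨x, hx⟩
      exact Subtype.ext (hπW i x hx)
    intro j
    obtain ⟨m, rfl⟩ : ∃ m : ℤ, m + 1 = j := ⟨j - 1, sub_add_cancel j 1⟩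
    exact hstep m
  · -- exactness
    intro i
    dsimp only
    rintro ⟨y, hyWmem⟩
    constructor
    · intro hy
      have hy0 : d i y = 0 := congrArg Subtype.val hy
      have hyW : u (i+1) y = 0 ∧ ρ (i+1) y = 0 := (hWmem _ y).mp hyWmem
      obtain ⟨z0, hz0⟩ := (hex i y).mp hy0
      have hysup : y ∈ NS (i+1) ⊔ LinearMap.range (ρ (i+1)) := by
        rw [h3]; exact ⟨z0, hz0⟩
      obtain ⟨av, hav, bv, hbv, hab⟩ := Submodule.mem_sup.mp hysup
      have hbfix : ρ (i+1) bv = bv := by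
        obtain ⟨c, hc⟩ := hbv
        rw [← hc, h1]
      have hbv0 : bv = 0 := by
        have hz : ρ (i+1) y = 0 := hyW.2
        rw [← hab, map_add, h4 _ _ hav, zero_add, hbfix] at hz
        exact hz
      have hyNS : y ∈ NS (i+1) := by
        rw [← hab, hbv0, add_zero]
        exact hav
      obtain ⟨z, hz⟩ := hNSle (i+1) hyNS
      refine ⟨⟨z - ρ (i+1+1) z, ?_⟩, ?_⟩
      · rw [hWmem]
        constructor
        · apply (H6 (i+1) _).mpr
          rw [map_sub, hρd (i+1) z, sub_zero, hz]
          exact hyNS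
        · rw [map_sub, h1, sub_self]
      · apply Subtype.ext
        show d (i+1) (z - ρ (i+1+1) z) = y
        rw [map_sub, hρd (i+1) z, sub_zero]
        exact hz
    · rintro ⟨⟨x, hx⟩, hxeq⟩
      rw [← hxeq]
      exact Subtype.ext (hdd i x)
  · -- syzygies
    intro k
    dsimp only
    obtain ⟨φ⟩ := h9 ((n:ℤ) * k) ⟨k, rfl⟩
    exact ⟨(φ.trans (Submodule.comapSubtypeEquivOfLe (hNSW ((n:ℤ)*k))).symm).trans
      (LinearEquiv.ofEq _ _ (hrange ((n:ℤ)*k)).symm)⟩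
  · -- Hom-exactness
    intro Q' hQ' i
    dsimp only
    intro h
    constructor
    · intro hh
      have hh' : ∀ x, h ((d (i+1)).restrict (hres (i+1)) x) = 0 :=
        fun x => LinearMap.congr_fun hh x
      have hcompzero : (h.comp (π i)).comp (d (i+1)) = 0 := by
        apply LinearMap.ext
        intro w
        show h (π i (d (i+1) w)) = 0
        have hy_range : d (i+1) w ∈ LinearMap.range (d (i+1)) := ⟨w, rfl⟩
        have hu0 : u (i+1) (d (i+1) w) = 0 := hWd (i+1) _ hy_range
        have hysup : d (i+1) w ∈ NS (i+1) ⊔ LinearMap.range (ρ (i+1)) := by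
          rw [h3]; exact hy_range
        obtain ⟨av, hav, bv, hbv, hab⟩ := Submodule.mem_sup.mp hysup
        have hbfix : ρ (i+1) bv = bv := by
          obtain ⟨c, hc⟩ := hbv
          rw [← hc, h1]
        have hρy : ρ (i+1) (d (i+1) w) = bv := by
          rw [← hab, map_add, h4 _ _ hav, zero_add, hbfix]
        have hπy : (π i (d (i+1) w) : P (i+1)) = av := by
          rw [hπval i _, hu0, sub_zero, hρy, ← hab, add_sub_cancel_right]
        have hmem : π i (d (i+1) w)
            ∈ LinearMap.range ((d (i+1)).restrict (hres (i+1))) := by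
          rw [hrange (i+1)]
          show (π i (d (i+1) w) : P (i+1)) ∈ NS (i+1)
          rw [hπy]
          exact hav
        obtain ⟨x0, hx0⟩ := hmem
        rw [← hx0]
        exact hh' x0
      obtain ⟨g₀, hg₀⟩ := (hhe Q' hQ' i _).mp hcompzero
      refine ⟨g₀.comp (W i).subtype, ?_⟩
      apply LinearMap.ext
      rintro ⟨x, hx⟩
      show g₀ (d i x) = h ⟨x, hx⟩
      have e1 : g₀ (d i x) = h (π i x) := LinearMap.congr_fun hg₀ x
      rw [e1]
      congr 1
      exact Subtype.ext (hπW i x hx)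
    · rintro ⟨g, hg⟩
      rw [← hg]
      apply LinearMap.ext
      rintro ⟨x, hx⟩
      have hzz : (d i).restrict (hres i) ((d (i+1)).restrict (hres (i+1)) ⟨x, hx⟩) = 0 :=
        Subtype.ext (hdd i x)
      show g ((d i).restrict (hres i) ((d (i+1)).restrict (hres (i+1)) ⟨x, hx⟩)) = 0
      rw [hzz, map_zero]

end Lemmas

/-- If `M` and `N` are projectively equivalent, then `M` is `n`-strongly Gorenstein
projective iff so is `N`. -/
theorem nSGProjective_iff_of_projectively_equivalent (R : Type u) [Ring R] (n : ℕ)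
    (hn : 0 < n) (M N : Type u) [AddCommGroup M] [Module R M] [AddCommGroup N]
    [Module R N]
    (h : ∃ P Q : ModuleCat.{u} R, Module.Projective R P ∧ Module.Projective R Q ∧
      Nonempty ((M × P) ≃ₗ[R] (N × Q))) :
    IsNSGProjective R n M ↔ IsNSGProjective R n N := by
  obtain ⟨P0, Q0, hP0, hQ0, ⟨e⟩⟩ := h
  constructor
  · intro hM
    exact isNSG_remove Q0 hQ0 (isNSG_congr e (isNSG_prod P0 hP0 hM))
  · intro hN
    exact isNSG_remove P0 hP0 (isNSG_congr e.symm (isNSG_prod Q0 hQ0 hN))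
end

section
/- The class of n-strongly Gorenstein flat modules is closed under arbitrary direct sums. -/
open CategoryTheory DirectSum

universe u

section AuxSG

variable {R : Type u} [CommRing R] {ι : Type u} [DecidableEq ι]
variable {A B C : ι → Type u}
  [∀ j, AddCommGroup (A j)] [∀ j, Module R (A j)]
  [∀ j, AddCommGroup (B j)] [∀ j, Module R (B j)]
  [∀ j, AddCommGroup (C j)] [∀ j, Module R (C j)]

/-- Direct sum of a family of linear maps. -/
noncomputable def dmapSG (f : ∀ j, A j →ₗ[R] B j) : (⨁ j, A j) →ₗ[R] ⨁ j, B j :=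
  DFinsupp.mapRange.linearMap f

lemma dmapSG_apply (f : ∀ j, A j →ₗ[R] B j) (x : ⨁ j, A j) (j : ι) :
    dmapSG f x j = f j (x j) :=
  DFinsupp.mapRange_apply _ (fun i => (f i).map_zero) x j

lemma dmapSG_lof (f : ∀ j, A j →ₗ[R] B j) (j : ι) (a : A j) :
    dmapSG f (DirectSum.lof R ι A j a) = DirectSum.lof R ι B j (f j a) := by
  apply DFinsupp.ext
  intro j'
  rcases eq_or_ne j' j with rfl | hne
  · rw [dmapSG_apply]
    simp [DirectSum.lof_eq_of, DirectSum.of_eq_same]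
  · rw [dmapSG_apply]
    simp [DirectSum.lof_eq_of, DirectSum.of_eq_of_ne _ _ _ hne]

lemma mem_range_dmapSG (f : ∀ j, A j →ₗ[R] B j) (y : ⨁ j, B j) :
    y ∈ LinearMap.range (dmapSG f) ↔ ∀ j, y j ∈ LinearMap.range (f j) := by
  classical
  constructor
  · rintro ⟨x, rfl⟩ j
    exact ⟨x j, (dmapSG_apply f x j).symm⟩
  · intro h
    refine ⟨DFinsupp.mk y.support (fun j => (h (j : ι)).choose), ?_⟩
    apply DFinsupp.ext
    intro j
    rw [dmapSG_apply, DFinsupp.mk_apply]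
    split_ifs with hj
    · exact (h j).choose_spec
    · rw [map_zero]
      exact (DFinsupp.notMem_support_iff.mp hj).symm

lemma dmapSG_injective (f : ∀ j, A j →ₗ[R] B j) (hf : ∀ j, Function.Injective (f j)) :
    Function.Injective (dmapSG f) := by
  intro x y hxy
  apply DFinsupp.ext
  intro j
  exact hf j (by rw [← dmapSG_apply, ← dmapSG_apply, hxy])

lemma dmapSG_exact (f : ∀ j, A j →ₗ[R] B j) (g : ∀ j, B j →ₗ[R] C j)
    (h : ∀ j, Function.Exact (f j) (g j)) : Function.Exact (dmapSG f) (dmapSG g) := by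
  intro y
  have h1 : (dmapSG g y = 0) ↔ ∀ j, g j (y j) = 0 := by
    constructor
    · intro h0 j
      rw [← dmapSG_apply, h0]; rfl
    · intro h0
      apply DFinsupp.ext
      intro j
      rw [dmapSG_apply, h0]; rfl
  have h2 : y ∈ Set.range (dmapSG f) ↔ ∀ j, y j ∈ LinearMap.range (f j) :=
    (mem_range_dmapSG f y)
  rw [h1, h2]
  exact forall_congr' fun j => (h j (y j)).trans (Iff.rfl)

/-- The range of a direct sum of maps is the direct sum of the ranges. -/
noncomputable def dsumRangeEquivSG (f : ∀ j, A j →ₗ[R] B j) :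
    (⨁ j, LinearMap.range (f j)) ≃ₗ[R] LinearMap.range (dmapSG f) := by
  have hinj : Function.Injective (dmapSG (fun j => (LinearMap.range (f j)).subtype)) :=
    dmapSG_injective _ fun j => Subtype.val_injective
  have hr : LinearMap.range (dmapSG (fun j => (LinearMap.range (f j)).subtype)) =
      LinearMap.range (dmapSG f) := by
    ext y
    rw [mem_range_dmapSG, mem_range_dmapSG]
    exact forall_congr' fun j => by rw [Submodule.range_subtype]
  exact (LinearEquiv.ofInjective _ hinj).trans (LinearEquiv.ofEq _ _ hr)

lemma directSumRight_comp_lTensor_dmapSG (I : Type u) [AddCommGroup I] [Module R I]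
    (f : ∀ j, A j →ₗ[R] B j) :
    (TensorProduct.directSumRight R R I B).toLinearMap ∘ₗ LinearMap.lTensor I (dmapSG f) =
      dmapSG (fun j => LinearMap.lTensor I (f j)) ∘ₗ
        (TensorProduct.directSumRight R R I A).toLinearMap := by
  apply TensorProduct.ext'
  intro x y
  induction y using DirectSum.induction_on with
  | zero => simp
  | of j a =>
      simp only [LinearMap.comp_apply, LinearEquiv.coe_coe, LinearMap.lTensor_tmul]
      rw [show (DirectSum.of A j a) = DirectSum.lof R ι A j a from rfl, dmapSG_lof,
        TensorProduct.directSumRight_tmul_lof, TensorProduct.directSumRight_tmul_lof,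
        dmapSG_lof]
      rfl
  | add y z hy hz =>
      have : x ⊗ₜ[R] (y + z) = x ⊗ₜ[R] y + x ⊗ₜ[R] z := TensorProduct.tmul_add x y z
      rw [this]
      simp only [map_add] at *
      rw [hy, hz]

end AuxSG

/-- The class of `n`-strongly Gorenstein flat modules is closed under arbitrary direct
sums. -/
theorem nSGFlat_directSum (R : Type u) [CommRing R] (n : ℕ) (hn : 0 < n)
    (ι : Type u) (M : ι → Type u) [∀ j, AddCommGroup (M j)] [∀ j, Module R (M j)]
    (hM : ∀ j, IsNSGFlat R n (M j)) :
    IsNSGFlat R n (⨁ j, M j) := by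
  haveI := Classical.decEq ι
  choose P d hP using hM
  refine ⟨fun i => ModuleCat.of R (⨁ j, (P j i)), fun i => dmapSG (fun j => d j i),
    ?_, ⟨?_, ?_⟩, ?_⟩
  · intro i
    haveI : ∀ j, Module.Flat R (P j i) := fun j => (hP j).1 i
    exact (inferInstance : Module.Flat R (⨁ j, (P j i)))
  · intro i
    exact dmapSG_exact _ _ fun j => (hP j).2.1.1 i
  · intro k
    exact ⟨(DFinsupp.mapRange.linearEquiv fun j => ((hP j).2.1.2 k).some).trans
      (dsumRangeEquivSG fun j => d j ((n : ℤ) * k))⟩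
  · intro I hI i
    have hx := dmapSG_exact _ _ fun j => (hP j).2.2 I hI i
    exact (Function.Exact.iff_of_ladder_linearEquiv
      (directSumRight_comp_lTensor_dmapSG (I : Type u) (fun j => d j (i + 1))).symm
      (directSumRight_comp_lTensor_dmapSG (I : Type u) (fun j => d j i)).symm).mp hx
end
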